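/- arXiv:2605.00388 — 4 statements merged into one kernel-verified Lean document; each statement's English description precedes it below -/
import Mathlib

section
/- Let L ⊆ ℝ^N be a nonempty closed set with 0 ∈ L and let v ∈ ℝ^N. The following are equivalent: (a) ⟨v, d⟩ ≥ 0 for every d ∈ L; (b) d = 0 is an optimal solution of the problem of minimizing ⟨v, d⟩ over d ∈ L; (c) for every scalar α ≥ ‖v‖ and every d ∈ ℝ^N, one has ⟨v, d⟩ + α · dist(d, L) ≥ 0, where dist(d, L) = inf_{d' ∈ L} ‖d − d'‖. -/
open scoped RealInnerProductSpace

/-- Equivalence of the primal characterizations of stationarity (Corollary 3.3.1),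
abstracted to an arbitrary nonempty closed set `L` containing `0`:
(a) `⟨v, d⟩ ≥ 0` for all `d ∈ L`;
(b) `d = 0` is an optimal solution of minimizing `⟨v, d⟩` over `L`;
(c) for every `α ≥ ‖v‖` and every `d`, `⟨v, d⟩ + α * dist(d, L) ≥ 0`. -/
theorem stmt_1 {N : ℕ} (L : Set (EuclideanSpace ℝ (Fin N)))
    (hne : L.Nonempty) (hcl : IsClosed L) (h0 : (0 : EuclideanSpace ℝ (Fin N)) ∈ L)
    (v : EuclideanSpace ℝ (Fin N)) :
    ((∀ d ∈ L, 0 ≤ ⟪v, d⟫) ↔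
      (∀ d ∈ L, ⟪v, (0 : EuclideanSpace ℝ (Fin N))⟫ ≤ ⟪v, d⟫)) ∧
    ((∀ d ∈ L, 0 ≤ ⟪v, d⟫) ↔
      (∀ α : ℝ, ‖v‖ ≤ α → ∀ d : EuclideanSpace ℝ (Fin N),
        0 ≤ ⟪v, d⟫ + α * Metric.infDist d L)) := by
  constructor
  · simp [inner_zero_right]
  constructor
  · intro ha α hα d
    obtain ⟨d', hd'L, hd'⟩ := hcl.exists_infDist_eq_dist hne d
    have h1 : 0 ≤ ⟪v, d'⟫ := ha d' hd'L
    have h2 : ⟪v, d⟫ = ⟪v, d'⟫ + ⟪v, d - d'⟫ := by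
      rw [inner_sub_right]; ring
    have h3 : |⟪v, d - d'⟫| ≤ α * Metric.infDist d L := by
      calc |⟪v, d - d'⟫| ≤ ‖v‖ * ‖d - d'‖ := abs_real_inner_le_norm v (d - d')
        _ ≤ α * Metric.infDist d L := by
            rw [hd', dist_eq_norm]
            exact mul_le_mul_of_nonneg_right hα (norm_nonneg _)
    have := neg_abs_le ⟪v, d - d'⟫
    linarith
  · intro hc d hd
    have := hc ‖v‖ le_rfl d
    rw [(Metric.infDist_zero_of_mem hd : Metric.infDist d L = 0)] at this
    linarith
end

section
/- (Lemma 3.2.1.) Assume the MPEC setup with F continuously differentiable and g twice continuously differentiable, and let z̄ = (x̄, ȳ) ∈ 𝓕. Assume the SBCQ holds at z̄: for every sequence {z^k} ⊂ 𝓕 with z^k → z̄ there exist multipliers λ^k ∈ M(z^k) forming a bounded sequence. If dz = (dx, dy) ∈ T(z̄; 𝓕), then dz ∈ T(z̄; Z) and there exists λ̄ ∈ M(z̄) such that dy solves the affine variational inequality AVI(∇_x L(z̄, λ̄) dx, ∇_y L(z̄, λ̄), K(z̄, λ̄; dx)); that is, dy ∈ K(z̄, λ̄; dx) and ⟨∇_x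 L(z̄, λ̄) dx + ∇_y L(z̄, λ̄) dy, v − dy⟩ ≥ 0 for all v ∈ K(z̄, λ̄; dx). -/
open Filter Topology BigOperators

noncomputable section

/-- Vectors in `ℝ^n`. -/
abbrev Vec (n : ℕ) := Fin n → ℝ

/-- Euclidean inner product on `ℝ^n`. -/
def dotp {n : ℕ} (a b : Vec n) : ℝ := ∑ i, a i * b i

/-- The tangent cone to `S` at `z`: all `d` such that there exist points `zs k ∈ S`
with `zs k → z` and scalars `ts k ↓ 0` with `(zs k - z) / ts k → d`. -/
def tangentCone {E : Type*} [NormedAddCommGroup E] [NormedSpace ℝ E]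
    (S : Set E) (z : E) : Set E :=
  {d | ∃ (zs : ℕ → E) (ts : ℕ → ℝ),
    (∀ k, zs k ∈ S) ∧ Tendsto zs atTop (𝓝 z) ∧
    (∀ k, 0 < ts k) ∧ Tendsto ts atTop (𝓝 0) ∧
    Tendsto (fun k => (ts k)⁻¹ • (zs k - z)) atTop (𝓝 d)}

variable {n m l : ℕ}

/-- Lower-level feasible set `C(x) = {y : g(x,y) ≤ 0}`. -/
def lowerC (g : Vec n × Vec m → Vec l) (x : Vec n) : Set (Vec m) :=
  {y | ∀ i, g (x, y) i ≤ 0}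

/-- Lower-level VI solution set `S(x) = SOL(F(x,·), C(x))`. -/
def lowerS (F : Vec n × Vec m → Vec m) (g : Vec n × Vec m → Vec l)
    (x : Vec n) : Set (Vec m) :=
  {y | y ∈ lowerC g x ∧ ∀ v ∈ lowerC g x, 0 ≤ dotp (F (x, y)) (v - y)}

/-- The MPEC feasible set `𝓕 = {(x,y) ∈ Z : y ∈ S(x)}`. -/
def feasSet (F : Vec n × Vec m → Vec m) (g : Vec n × Vec m → Vec l)
    (Z : Set (Vec n × Vec m)) : Set (Vec n × Vec m) :=
  {z | z ∈ Z ∧ z.2 ∈ lowerS F g z.1}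

/-- `j`-th component of the gradient `∇_y g_i(z)`. -/
def gradYg (g : Vec n × Vec m → Vec l) (i : Fin l) (z : Vec n × Vec m) : Vec m :=
  fun j => fderiv ℝ (fun p => g p i) z (0, Pi.single j 1)

/-- `⟨∇_x g_i(z̄), dx⟩`, expressed via the Fréchet derivative in the `x`-slot. -/
def dgX (g : Vec n × Vec m → Vec l) (i : Fin l) (z : Vec n × Vec m) (dx : Vec n) : ℝ :=
  fderiv ℝ (fun p => g p i) z (dx, 0)

/-- `⟨∇_y g_i(z̄), dy⟩`, expressed via the Fréchet derivative in the `y`-slot. -/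
def dgY (g : Vec n × Vec m → Vec l) (i : Fin l) (z : Vec n × Vec m) (dy : Vec m) : ℝ :=
  fderiv ℝ (fun p => g p i) z (0, dy)

/-- Multiplier set `M(z)` of the lower-level VI. -/
def multSet (F : Vec n × Vec m → Vec m) (g : Vec n × Vec m → Vec l)
    (z : Vec n × Vec m) : Set (Vec l) :=
  {lam | (∀ i, 0 ≤ lam i) ∧
    (∀ j, F z j + ∑ i, lam i * gradYg g i z j = 0) ∧
    (∑ i, lam i * g z i = 0)}

/-- VI Lagrangian `L(z, λ) = F(z) + Σ_i λ_i ∇_y g_i(z)`. -/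
def viLag (F : Vec n × Vec m → Vec m) (g : Vec n × Vec m → Vec l)
    (z : Vec n × Vec m) (lam : Vec l) : Vec m :=
  fun j => F z j + ∑ i, lam i * gradYg g i z j

/-- Lifted critical cone `K(z̄, λ)`. -/
def liftedCone (g : Vec n × Vec m → Vec l) (zbar : Vec n × Vec m) (lam : Vec l) :
    Set (Vec n × Vec m) :=
  {d | ∀ i, g zbar i = 0 →
      (lam i = 0 → dgX g i zbar d.1 + dgY g i zbar d.2 ≤ 0) ∧
      (0 < lam i → dgX g i zbar d.1 + dgY g i zbar d.2 = 0)}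

/-- Directional critical set `K(z̄, λ; dx)`. -/
def dirCrit (g : Vec n × Vec m → Vec l) (zbar : Vec n × Vec m) (lam : Vec l)
    (dx : Vec n) : Set (Vec m) :=
  {dy | (dx, dy) ∈ liftedCone g zbar lam}

/-- `∇_x L(z̄, λ) dx`, the partial Jacobian of the VI Lagrangian in `x` applied to `dx`. -/
def jacLx (F : Vec n × Vec m → Vec m) (g : Vec n × Vec m → Vec l)
    (zbar : Vec n × Vec m) (lam : Vec l) (dx : Vec n) : Vec m :=
  fun j => fderiv ℝ (fun z => viLag F g z lam j) zbar (dx, 0)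

/-- `∇_y L(z̄, λ) dy`, the partial Jacobian of the VI Lagrangian in `y` applied to `dy`. -/
def jacLy (F : Vec n × Vec m → Vec m) (g : Vec n × Vec m → Vec l)
    (zbar : Vec n × Vec m) (lam : Vec l) (dy : Vec m) : Vec m :=
  fun j => fderiv ℝ (fun z => viLag F g z lam j) zbar (0, dy)

/-- `dy` solves `AVI(∇_x L(z̄,λ) dx, ∇_y L(z̄,λ), K(z̄,λ;dx))`. -/
def solvesAVI (F : Vec n × Vec m → Vec m) (g : Vec n × Vec m → Vec l)
    (zbar : Vec n × Vec m) (lam : Vec l) (dx : Vec n) (dy : Vec m) : Prop :=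
  dy ∈ dirCrit g zbar lam dx ∧
  ∀ v ∈ dirCrit g zbar lam dx,
    0 ≤ dotp (jacLx F g zbar lam dx + jacLy F g zbar lam dy) (v - dy)

/-- SBCQ at `zbar`: every feasible sequence converging to `zbar` admits a bounded
sequence of multipliers. -/
def SBCQ (F : Vec n × Vec m → Vec m) (g : Vec n × Vec m → Vec l)
    (Z : Set (Vec n × Vec m)) (zbar : Vec n × Vec m) : Prop :=
  ∀ zs : ℕ → Vec n × Vec m, (∀ k, zs k ∈ feasSet F g Z) → Tendsto zs atTop (𝓝 zbar) →
    ∃ lams : ℕ → Vec l, (∀ k, lams k ∈ multSet F g (zs k)) ∧ ∃ C : ℝ, ∀ k, ‖lams k‖ ≤ C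

open Asymptotics in
lemma diffquot {E : Type*} [NormedAddCommGroup E] [NormedSpace ℝ E] {f : E → ℝ} {x : E}
    (hf : DifferentiableAt ℝ f x) {zs : ℕ → E} {ts : ℕ → ℝ}
    (hz : Tendsto zs atTop (𝓝 x)) {d : E}
    (hd : Tendsto (fun k => (ts k)⁻¹ • (zs k - x)) atTop (𝓝 d)) :
    Tendsto (fun k => (ts k)⁻¹ * (f (zs k) - f x)) atTop (𝓝 (fderiv ℝ f x d)) := by
  have hfd := hf.hasFDerivAt
  have h1 : (fun z => f z - f x - fderiv ℝ f x (z - x)) =o[𝓝 x] (fun z => z - x) :=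
    hfd.isLittleO
  have h2 := h1.comp_tendsto hz
  have h3 : (fun k => (ts k)⁻¹ • (f (zs k) - f x - fderiv ℝ f x (zs k - x)))
      =o[atTop] (fun k => (ts k)⁻¹ • (zs k - x)) :=
    (isBigO_refl (fun k => (ts k)⁻¹) atTop).smul_isLittleO h2
  have h4 : (fun k => (ts k)⁻¹ • (zs k - x)) =O[atTop] (fun _ : ℕ => (1:ℝ)) :=
    hd.isBigO_one ℝ
  have h5 : Tendsto (fun k => (ts k)⁻¹ • (f (zs k) - f x - fderiv ℝ f x (zs k - x)))
      atTop (𝓝 0) := isLittleO_one_iff ℝ |>.mp (h3.trans_isBigO h4)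
  have h6 : Tendsto (fun k => fderiv ℝ f x ((ts k)⁻¹ • (zs k - x))) atTop
      (𝓝 (fderiv ℝ f x d)) := ((fderiv ℝ f x).continuous.tendsto d).comp hd
  have := h5.add h6
  rw [zero_add] at this
  convert this using 2 with k
  simp [smul_eq_mul, map_smul]
  ring

variable {n m l : ℕ}

lemma contDiff_comp {g : Vec n × Vec m → Vec l} (hg : ContDiff ℝ 2 g) (i : Fin l) :
    ContDiff ℝ 2 (fun p => g p i) :=
  (ContinuousLinearMap.proj (R := ℝ) (φ := fun _ : Fin l => ℝ) i).contDiff.comp hg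

lemma dgXY {g : Vec n × Vec m → Vec l} (hg : ContDiff ℝ 2 g) (i : Fin l)
    (z : Vec n × Vec m) (dx : Vec n) (dy : Vec m) :
    dgX g i z dx + dgY g i z dy = fderiv ℝ (fun p => g p i) z (dx, dy) := by
  rw [dgX, dgY, ← map_add]
  congr 1
  ext <;> simp

lemma dgY_dotp {g : Vec n × Vec m → Vec l} (i : Fin l)
    (z : Vec n × Vec m) (w : Vec m) :
    dgY g i z w = dotp (gradYg g i z) w := by
  have hrep : ((0 : Vec n), w) = ∑ j : Fin m, w j • ((0 : Vec n), (Pi.single j 1 : Vec m)) := by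
    rw [Prod.ext_iff]
    constructor
    · rw [Prod.fst_sum]
      simp
    · rw [Prod.snd_sum]
      funext x
      rw [Finset.sum_apply]
      simp [Pi.single_apply]
  rw [dgY, hrep, map_sum]
  simp only [map_smul, smul_eq_mul]
  simp [dotp, gradYg, mul_comm]

lemma gradYg_contDiff {g : Vec n × Vec m → Vec l} (hg : ContDiff ℝ 2 g) (i : Fin l) (j : Fin m) :
    ContDiff ℝ 1 (fun z => gradYg g i z j) := by
  have h1 : ContDiff ℝ 1 (fun z => fderiv ℝ (fun p => g p i) z) :=
    (contDiff_comp hg i).fderiv_right (by norm_num)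
  exact (ContinuousLinearMap.apply ℝ ℝ ((0 : Vec n), (Pi.single j 1 : Vec m))).contDiff.comp h1


/-- Lemma 3.2.1: under SBCQ, every tangent direction `dz = (dx, dy) ∈ T(z̄; 𝓕)` lies in
`T(z̄; Z)` and there is a multiplier `λ̄ ∈ M(z̄)` such that `dy` solves the affine
variational inequality `AVI(∇_x L(z̄,λ̄) dx, ∇_y L(z̄,λ̄), K(z̄,λ̄;dx))`. -/
theorem stmt_2 {n m l : ℕ}
    (F : Vec n × Vec m → Vec m) (g : Vec n × Vec m → Vec l)
    (Z : Set (Vec n × Vec m))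
    (hF : ContDiff ℝ 1 F) (hg : ContDiff ℝ 2 g)
    (zbar : Vec n × Vec m) (hzbar : zbar ∈ feasSet F g Z)
    (hSBCQ : SBCQ F g Z zbar)
    (dz : Vec n × Vec m) (hdz : dz ∈ tangentCone (feasSet F g Z) zbar) :
    dz ∈ tangentCone Z zbar ∧
    ∃ lam ∈ multSet F g zbar, solvesAVI F g zbar lam dz.1 dz.2 := by
  obtain ⟨zs0, ts0, hzsF0, hzs0, htp0, ht00, hlim0⟩ := hdz
  constructor
  · exact ⟨zs0, ts0, fun k => (hzsF0 k).1, hzs0, htp0, ht00, hlim0⟩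
  obtain ⟨lams0, hlams0, C, hC⟩ := hSBCQ zs0 hzsF0 hzs0
  -- Bolzano–Weierstrass
  have hball : ∀ k, lams0 k ∈ Metric.closedBall (0 : Vec l) C := by
    intro k; simpa [Metric.mem_closedBall, dist_zero_right] using hC k
  obtain ⟨lam, -, φ, hφ, hlamlim⟩ :=
    (isCompact_closedBall (0 : Vec l) C).tendsto_subseq hball
  set zs : ℕ → Vec n × Vec m := zs0 ∘ φ with hzs_def
  set ts : ℕ → ℝ := ts0 ∘ φ with hts_def
  set lams : ℕ → Vec l := lams0 ∘ φ with hlams_def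
  have hφat : Tendsto φ atTop atTop := hφ.tendsto_atTop
  have hzsF : ∀ k, zs k ∈ feasSet F g Z := fun k => hzsF0 (φ k)
  have hzs : Tendsto zs atTop (𝓝 zbar) := hzs0.comp hφat
  have htp : ∀ k, 0 < ts k := fun k => htp0 (φ k)
  have hlim : Tendsto (fun k => (ts k)⁻¹ • (zs k - zbar)) atTop (𝓝 dz) := hlim0.comp hφat
  have hlams : ∀ k, lams k ∈ multSet F g (zs k) := fun k => hlams0 (φ k)
  clear hlim0 hzs0 ht00 hC hball hzsF0 htp0 hlams0
  -- basic facts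
  have hgc : ∀ i : Fin l, ContDiff ℝ 2 (fun p => g p i) := contDiff_comp hg
  have hgd : ∀ i, DifferentiableAt ℝ (fun p => g p i) zbar :=
    fun i => ((hgc i).differentiable (by norm_num)).differentiableAt
  have hFd : ∀ j : Fin m, DifferentiableAt ℝ (fun z => F z j) zbar := fun j =>
    (((ContinuousLinearMap.proj (R := ℝ) (φ := fun _ : Fin m => ℝ) j).contDiff.comp
      hF).differentiable one_ne_zero).differentiableAt
  have hGcd : ∀ (i : Fin l) (j : Fin m), ContDiff ℝ 1 (fun z => gradYg g i z j) :=
    gradYg_contDiff hg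
  have hGd : ∀ i j, DifferentiableAt ℝ (fun z => gradYg g i z j) zbar :=
    fun i j => (((hGcd i j)).differentiable one_ne_zero).differentiableAt
  -- sequence facts
  have hgk : ∀ k i, g (zs k) i ≤ 0 := fun k i => (hzsF k).2.1 i
  have hlamnn : ∀ k i, 0 ≤ lams k i := fun k => (hlams k).1
  have hstat : ∀ k j, F (zs k) j + ∑ i, lams k i * gradYg g i (zs k) j = 0 :=
    fun k => (hlams k).2.1
  have hcomp : ∀ k, ∑ i, lams k i * g (zs k) i = 0 := fun k => (hlams k).2.2
  have hcompi : ∀ k i, lams k i * g (zs k) i = 0 := by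
    intro k i
    have hnp : ∀ i ∈ Finset.univ, lams k i * g (zs k) i ≤ 0 :=
      fun i _ => mul_nonpos_of_nonneg_of_nonpos (hlamnn k i) (hgk k i)
    have := (Finset.sum_eq_zero_iff_of_nonpos hnp).mp (hcomp k) i (Finset.mem_univ i)
    exact this
  -- componentwise limits of lams
  have hlami : ∀ i, Tendsto (fun k => lams k i) atTop (𝓝 (lam i)) :=
    fun i => (tendsto_pi_nhds.mp hlamlim) i
  have hlamnn' : ∀ i, 0 ≤ lam i := fun i =>
    le_of_tendsto_of_tendsto tendsto_const_nhds (hlami i)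
      (Filter.Eventually.of_forall fun k => hlamnn k i)
  -- continuity limits
  have hFcont : ∀ j, Tendsto (fun k => F (zs k) j) atTop (𝓝 (F zbar j)) := fun j =>
    ((continuous_apply j).tendsto (F zbar)).comp ((hF.continuous.tendsto zbar).comp hzs)
  have hGcont : ∀ i j, Tendsto (fun k => gradYg g i (zs k) j) atTop (𝓝 (gradYg g i zbar j)) :=
    fun i j => (((hGcd i j).continuous).tendsto zbar).comp hzs
  have hgcont : ∀ i, Tendsto (fun k => g (zs k) i) atTop (𝓝 (g zbar i)) :=
    fun i => (((hgc i).continuous).tendsto zbar).comp hzs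
  -- lam is a multiplier at zbar
  have hstat' : ∀ j, F zbar j + ∑ i, lam i * gradYg g i zbar j = 0 := by
    intro j
    have h1 : Tendsto (fun k => F (zs k) j + ∑ i, lams k i * gradYg g i (zs k) j) atTop
        (𝓝 (F zbar j + ∑ i, lam i * gradYg g i zbar j)) :=
      (hFcont j).add (tendsto_finset_sum _ fun i _ => (hlami i).mul (hGcont i j))
    have h2 : Tendsto (fun k => F (zs k) j + ∑ i, lams k i * gradYg g i (zs k) j) atTop
        (𝓝 0) := by
      simpa only [hstat] using tendsto_const_nhds (f := atTop) (x := (0:ℝ))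
    exact tendsto_nhds_unique h1 h2
  have hcomp' : ∑ i, lam i * g zbar i = 0 := by
    have h1 : Tendsto (fun k => ∑ i, lams k i * g (zs k) i) atTop
        (𝓝 (∑ i, lam i * g zbar i)) :=
      tendsto_finset_sum _ fun i _ => (hlami i).mul (hgcont i)
    have h2 : Tendsto (fun k => ∑ i, lams k i * g (zs k) i) atTop (𝓝 0) := by
      simpa only [hcomp] using tendsto_const_nhds (f := atTop) (x := (0:ℝ))
    exact tendsto_nhds_unique h1 h2
  have hlamM : lam ∈ multSet F g zbar := ⟨hlamnn', hstat', hcomp'⟩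
  -- difference quotients for g
  have hquot : ∀ i, Tendsto (fun k => (ts k)⁻¹ * (g (zs k) i - g zbar i)) atTop
      (𝓝 (dgX g i zbar dz.1 + dgY g i zbar dz.2)) := by
    intro i
    have := diffquot (hgd i) hzs hlim
    rwa [dgXY hg, Prod.mk.eta]
  -- active-constraint direction facts
  have hci_le : ∀ i, g zbar i = 0 → dgX g i zbar dz.1 + dgY g i zbar dz.2 ≤ 0 := by
    intro i hi
    refine le_of_tendsto (hquot i) (Filter.Eventually.of_forall fun k => ?_)
    rw [hi, sub_zero]
    exact mul_nonpos_of_nonneg_of_nonpos (le_of_lt (inv_pos.mpr (htp k))) (hgk k i)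
  -- if lams k i > 0 frequently then the directional derivative vanishes
  have hfreq : ∀ i, g zbar i = 0 → (∃ᶠ k in atTop, 0 < lams k i) →
      dgX g i zbar dz.1 + dgY g i zbar dz.2 = 0 := by
    intro i hi hfr
    have hfr0 : ∃ᶠ k in atTop, (ts k)⁻¹ * (g (zs k) i - g zbar i) ∈ ({0} : Set ℝ) := by
      refine hfr.mono fun k hk => ?_
      have hg0 : g (zs k) i = 0 := by
        by_contra h
        exact absurd (hcompi k i) (mul_ne_zero (ne_of_gt hk) h)
      simp [hg0, hi]
    have := mem_closure_of_frequently_of_tendsto hfr0 (hquot i)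
    simpa using this
  -- if lam i > 0 then eventually lams k i > 0 and g (zs k) i = 0
  have hcieq : ∀ i, 0 < lam i → dgX g i zbar dz.1 + dgY g i zbar dz.2 = 0 := by
    intro i hpos
    have hev : ∀ᶠ k in atTop, 0 < lams k i :=
      (hlami i).eventually (eventually_gt_nhds hpos)
    apply hfreq i ?_ hev.frequently
    -- g zbar i = 0 from complementarity: lam i * g zbar i = 0 since each term ≤ 0 sums to 0
    have hgz : ∀ i, g zbar i ≤ 0 := fun i' => hzbar.2.1 i'
    have hnp : ∀ i' ∈ Finset.univ, lam i' * g zbar i' ≤ 0 :=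
      fun i' _ => mul_nonpos_of_nonneg_of_nonpos (hlamnn' i') (hgz i')
    have h0 := (Finset.sum_eq_zero_iff_of_nonpos hnp).mp hcomp' i (Finset.mem_univ i)
    rcases mul_eq_zero.mp h0 with h | h
    · exact absurd h (ne_of_gt hpos)
    · exact h
  -- dy is in the directional critical set
  have hdyK : dz.2 ∈ dirCrit g zbar lam dz.1 := by
    intro i hi
    exact ⟨fun _ => hci_le i hi, fun hpos => hcieq i hpos⟩
  refine ⟨lam, hlamM, hdyK, ?_⟩
  intro v hv
  set w : Vec m := v - dz.2 with hw_def
  -- derivative of the Lagrangian components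
  set DF : Fin m → (Vec n × Vec m) →L[ℝ] ℝ := fun j => fderiv ℝ (fun z => F z j) zbar with hDF
  set DG : Fin l → Fin m → (Vec n × Vec m) →L[ℝ] ℝ :=
    fun i j => fderiv ℝ (fun z => gradYg g i z j) zbar with hDG
  have hPhi : ∀ j, HasFDerivAt (fun z => viLag F g z lam j)
      (DF j + ∑ i, lam i • DG i j) zbar := by
    intro j
    have h1 : HasFDerivAt (fun z => F z j + ∑ i, lam i * gradYg g i z j)
        (DF j + ∑ i, lam i • DG i j) zbar :=
      ((hFd j).hasFDerivAt).add (HasFDerivAt.fun_sum fun i _ =>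
        ((hGd i j).hasFDerivAt).const_mul (lam i))
    exact h1
  have hjac : ∀ j, jacLx F g zbar lam dz.1 j + jacLy F g zbar lam dz.2 j =
      (DF j + ∑ i, lam i • DG i j) dz := by
    intro j
    have hfd := (hPhi j).fderiv
    rw [jacLx, jacLy, hfd, ← map_add]
    congr 1
    ext x
    · simp
    · simp
  -- limit value
  set A : ℝ := (∑ j, DF j dz * w j) + ∑ i, lam i * ∑ j, DG i j dz * w j with hA
  -- the sequences
  set Ak : ℕ → ℝ := fun k =>
    (∑ j, ((ts k)⁻¹ * (F (zs k) j - F zbar j)) * w j)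
    + ∑ i, lams k i * ∑ j, ((ts k)⁻¹ * (gradYg g i (zs k) j - gradYg g i zbar j)) * w j
    with hAk
  set Bk : ℕ → ℝ := fun k =>
    ∑ i, ((ts k)⁻¹ * (lams k i - lam i)) * dotp (gradYg g i zbar) w with hBk
  have hAlim : Tendsto Ak atTop (𝓝 A) := by
    rw [hAk, hA]
    apply Tendsto.add
    · exact tendsto_finset_sum _ fun j _ =>
        (diffquot (hFd j) hzs hlim).mul_const (w j)
    · exact tendsto_finset_sum _ fun i _ =>
        (hlami i).mul (tendsto_finset_sum _ fun j _ =>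
          (diffquot (hGd i j) hzs hlim).mul_const (w j))
  have hAB : ∀ k, Ak k + Bk k = 0 := by
    intro k
    have e1 : ∀ j, (F (zs k) j - F zbar j) +
        ((∑ i, lams k i * (gradYg g i (zs k) j - gradYg g i zbar j)) +
         ∑ i, (lams k i - lam i) * gradYg g i zbar j) = 0 := by
      intro j
      have hsum : (∑ i, lams k i * (gradYg g i (zs k) j - gradYg g i zbar j)) +
          ∑ i, (lams k i - lam i) * gradYg g i zbar j
          = (∑ i, lams k i * gradYg g i (zs k) j) - ∑ i, lam i * gradYg g i zbar j := by
        rw [← Finset.sum_add_distrib, ← Finset.sum_sub_distrib]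
        apply Finset.sum_congr rfl; intros; ring
      rw [hsum]
      have h1 := hstat k j
      have h2 := hstat' j
      linarith
    have step1 : Ak k + Bk k =
        (∑ j, ((ts k)⁻¹ * w j) * (F (zs k) j - F zbar j))
        + ((∑ j, ∑ i, ((ts k)⁻¹ * w j) * (lams k i * (gradYg g i (zs k) j - gradYg g i zbar j)))
        + (∑ j, ∑ i, ((ts k)⁻¹ * w j) * ((lams k i - lam i) * gradYg g i zbar j))) := by
      rw [hAk, hBk, add_assoc]
      congr 1
      · apply Finset.sum_congr rfl; intros; ring
      congr 1
      · rw [Finset.sum_comm]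
        apply Finset.sum_congr rfl; intro i _
        rw [Finset.mul_sum]
        apply Finset.sum_congr rfl; intros; ring
      · rw [Finset.sum_comm]
        apply Finset.sum_congr rfl; intro i _
        rw [dotp, Finset.mul_sum]
        apply Finset.sum_congr rfl; intros; ring
    rw [step1, ← Finset.sum_add_distrib, ← Finset.sum_add_distrib]
    apply Finset.sum_eq_zero
    intro j _
    rw [← Finset.mul_sum, ← Finset.mul_sum, ← mul_add, ← mul_add, e1 j, mul_zero]
  -- each Bk term is eventually nonpositive
  have hterm : ∀ i : Fin l, ∀ᶠ k in atTop,
      ((ts k)⁻¹ * (lams k i - lam i)) * dotp (gradYg g i zbar) w ≤ 0 := by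
    intro i
    have hdgYw : dgY g i zbar w = dgY g i zbar v - dgY g i zbar dz.2 := by
      rw [dgY, dgY, dgY, ← map_sub]
      congr 1
      ext x
      · simp
      · simp [hw_def]
    rcases lt_or_eq_of_le (hzbar.2.1 i) with hneg | hzero
    · -- inactive constraint
      have hev : ∀ᶠ k in atTop, g (zs k) i < 0 :=
        (hgcont i).eventually (eventually_lt_nhds hneg)
      have hev0 : ∀ᶠ k in atTop, lams k i = 0 := by
        refine hev.mono fun k hk => ?_
        rcases mul_eq_zero.mp (hcompi k i) with h | h
        · exact h
        · exact absurd h (ne_of_lt hk)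
      have hlam0 : lam i = 0 := by
        have h0 : Tendsto (fun k => lams k i) atTop (𝓝 0) :=
          tendsto_const_nhds.congr' (hev0.mono fun k hk => hk.symm)
        exact tendsto_nhds_unique (hlami i) h0
      refine hev0.mono fun k hk => ?_
      rw [hk, hlam0, sub_zero, mul_zero, zero_mul]
    · -- active constraint
      rcases (hlamnn' i).lt_or_eq with hpos | hzerolam
      · -- lam i > 0 : the inner product vanishes
        have h1 : dgX g i zbar dz.1 + dgY g i zbar dz.2 = 0 := hcieq i hpos
        have h2 : dgX g i zbar dz.1 + dgY g i zbar v = 0 := (hv i hzero).2 hpos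
        have hdot : dotp (gradYg g i zbar) w = 0 := by
          rw [← dgY_dotp, hdgYw]; linarith
        exact Filter.Eventually.of_forall fun k => by rw [hdot, mul_zero]
      · -- lam i = 0
        by_cases hf : ∃ᶠ k in atTop, 0 < lams k i
        · have hci0 := hfreq i hzero hf
          have hvle : dgX g i zbar dz.1 + dgY g i zbar v ≤ 0 :=
            (hv i hzero).1 hzerolam.symm
          have hdot : dotp (gradYg g i zbar) w ≤ 0 := by
            rw [← dgY_dotp, hdgYw]; linarith
          refine Filter.Eventually.of_forall fun k => ?_
          have hco : 0 ≤ (ts k)⁻¹ * (lams k i - lam i) := by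
            rw [← hzerolam, sub_zero]
            exact mul_nonneg (le_of_lt (inv_pos.mpr (htp k))) (hlamnn k i)
          exact mul_nonpos_of_nonneg_of_nonpos hco hdot
        · have hev0 : ∀ᶠ k in atTop, lams k i = 0 :=
            (Filter.not_frequently.mp hf).mono fun k hk =>
              le_antisymm (not_lt.mp hk) (hlamnn k i)
          refine hev0.mono fun k hk => ?_
          rw [hk, ← hzerolam, sub_zero, mul_zero, zero_mul]
  have hBle : ∀ᶠ k in atTop, Bk k ≤ 0 := by
    have hall := Filter.eventually_all.mpr hterm
    refine hall.mono fun k hk => ?_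
    rw [hBk]
    exact Finset.sum_nonpos fun i _ => hk i
  have hAge : ∀ᶠ k in atTop, 0 ≤ Ak k :=
    hBle.mono fun k hk => by have := hAB k; linarith
  have hA_nonneg : 0 ≤ A :=
    le_of_tendsto_of_tendsto tendsto_const_nhds hAlim hAge
  -- identify A with the AVI quantity
  have hfinal : dotp (jacLx F g zbar lam dz.1 + jacLy F g zbar lam dz.2) (v - dz.2) = A := by
    rw [dotp, hA]
    calc ∑ j, (jacLx F g zbar lam dz.1 + jacLy F g zbar lam dz.2) j * (v - dz.2) j
        = ∑ j, (DF j dz + ∑ i, lam i * DG i j dz) * w j := by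
          apply Finset.sum_congr rfl; intro j _
          rw [Pi.add_apply, hjac j]
          simp only [ContinuousLinearMap.add_apply, ContinuousLinearMap.coe_sum',
            Finset.sum_apply, ContinuousLinearMap.coe_smul', Pi.smul_apply, smul_eq_mul]
          rfl
      _ = (∑ j, DF j dz * w j) + ∑ j, ∑ i, lam i * (DG i j dz * w j) := by
          rw [← Finset.sum_add_distrib]
          apply Finset.sum_congr rfl; intro j _
          rw [add_mul, Finset.sum_mul]
          congr 1
          apply Finset.sum_congr rfl; intros; ring
      _ = (∑ j, DF j dz * w j) + ∑ i, lam i * ∑ j, DG i j dz * w j := by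
          congr 1
          rw [Finset.sum_comm]
          apply Finset.sum_congr rfl; intro i _
          rw [Finset.mul_sum]
  rw [hfinal]
  exact hA_nonneg
end
end

section
/- (Proposition 3.2.2, inclusion part.) Assume the MPEC setup with F continuously differentiable and g twice continuously differentiable, and let z̄ ∈ 𝓕. Assume the CRCQ holds at z̄: there is a neighborhood U of z̄ such that for every subset J ⊆ 𝓘(z̄), the family of gradients {∇_y g_i(z) : i ∈ J} has the same rank for all z ∈ U, and assume M(z) is nonempty for every z ∈ 𝓕 ∩ U. Then for every dz = (dx, dy) ∈ T(z̄; 𝓕), one has dz ∈ T(z̄; Z) and there exists an extreme point λ̄ of the polyhedron M(z̄) such that dy solves AVI(∇_x L(z̄, λ̄) dx, ∇_y L(z̄, λ̄), K(z̄, λ̄; dx)); that is, T(z̄; 𝓕) ⊆ 𝓛^e(z̄; 𝓕). -/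
open Filter Topology BigOperators

noncomputable section

variable {n m l : ℕ}

/-- Rank of the family of gradients `{∇_y g_i(z) : i ∈ J}`. -/
def gradRank (g : Vec n × Vec m → Vec l) (J : Set (Fin l)) (z : Vec n × Vec m) : ℕ :=
  Module.finrank ℝ (Submodule.span ℝ ((fun i => gradYg g i z) '' J))

/-- CRCQ at `zbar`: on some neighborhood `U` of `zbar`, for every subset `J` of the
active index set `𝓘(zbar)`, the family `{∇_y g_i(z) : i ∈ J}` has constant rank on `U`. -/
def CRCQ (g : Vec n × Vec m → Vec l) (zbar : Vec n × Vec m) (U : Set (Vec n × Vec m)) : Prop :=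
  ∀ J : Set (Fin l), (∀ i ∈ J, g zbar i = 0) →
    ∀ z ∈ U, gradRank g J z = gradRank g J zbar

-- ===== auxiliary lemmas =====
section Helpers
open Asymptotics

lemma tendsto_diffquot {E : Type*} [NormedAddCommGroup E] [NormedSpace ℝ E]
    {f : E → ℝ} {z : E} (hf : DifferentiableAt ℝ f z)
    {zs : ℕ → E} {ts : ℕ → ℝ} {d : E}
    (hz : Tendsto zs atTop (𝓝 z))
    (hd : Tendsto (fun k => (ts k)⁻¹ • (zs k - z)) atTop (𝓝 d)) :
    Tendsto (fun k => (ts k)⁻¹ * (f (zs k) - f z)) atTop (𝓝 (fderiv ℝ f z d)) := by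
  have h1 : (fun x => f x - f z - fderiv ℝ f z (x - z)) =o[𝓝 z] fun x => x - z :=
    hf.hasFDerivAt.isLittleO
  have h2 : (fun k => f (zs k) - f z - fderiv ℝ f z (zs k - z)) =o[atTop]
      fun k => zs k - z := h1.comp_tendsto hz
  have h3 : (fun k => (ts k)⁻¹ • (f (zs k) - f z - fderiv ℝ f z (zs k - z))) =o[atTop]
      fun k => (ts k)⁻¹ • (zs k - z) :=
    (isBigO_refl (fun k => (ts k)⁻¹) atTop).smul_isLittleO h2
  have h4 : (fun k => (ts k)⁻¹ • (zs k - z)) =O[atTop] (fun _ => (1:ℝ)) :=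
    hd.isBigO_one ℝ
  have h5 : Tendsto (fun k => (ts k)⁻¹ • (f (zs k) - f z - fderiv ℝ f z (zs k - z)))
      atTop (𝓝 0) := (h3.trans_isBigO h4).tendsto_div_nhds_zero.congr' (by
        filter_upwards with k; simp)
  have h6 : Tendsto (fun k => fderiv ℝ f z ((ts k)⁻¹ • (zs k - z))) atTop
      (𝓝 (fderiv ℝ f z d)) := ((fderiv ℝ f z).continuous.tendsto d).comp hd
  have := h5.add h6
  rw [zero_add] at this
  refine this.congr (fun k => ?_)
  simp only [smul_eq_mul, map_smul]
  ring

variable {n m l : ℕ} {g : Vec n × Vec m → Vec l}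

lemma contDiff_gi (hg : ContDiff ℝ 2 g) (i : Fin l) : ContDiff ℝ 2 (fun p => g p i) :=
  (ContinuousLinearMap.proj i : Vec l →L[ℝ] ℝ).contDiff.comp hg

lemma contDiff_gradYg (hg : ContDiff ℝ 2 g) (i : Fin l) (j : Fin m) :
    ContDiff ℝ 1 (fun z : Vec n × Vec m => gradYg g i z j) := by
  have h1 : ContDiff ℝ 1 (fderiv ℝ (fun p => g p i)) :=
    (contDiff_gi hg i).fderiv_right (by norm_num)
  exact (ContinuousLinearMap.apply ℝ ℝ ((0, Pi.single j 1) : Vec n × Vec m)).contDiff.comp h1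

lemma clm_split (φ : (Vec n × Vec m) →L[ℝ] ℝ) (a : Vec n) (b : Vec m) :
    φ (a, b) = φ (a, 0) + φ (0, b) := by
  rw [← map_add]
  congr 1
  ext x
  · simp
  · simp

lemma fderiv_y_expand (i : Fin l) (z : Vec n × Vec m) (w : Vec m) :
    fderiv ℝ (fun p => g p i) z ((0 : Vec n), w) = ∑ j, w j * gradYg g i z j := by
  have hw : ((0 : Vec n), w) = ∑ j, (w j) • (((0:Vec n), Pi.single j 1) : Vec n × Vec m) := by
    ext x
    · simp [Prod.fst_sum]
    · simp only [Prod.snd_sum, Prod.smul_mk, Finset.sum_apply, Pi.smul_apply, smul_eq_mul]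
      rw [Finset.sum_eq_single x]
      · simp
      · intro b _ hb; simp [Pi.single_apply, hb]
      · simp
  rw [hw, map_sum]
  refine Finset.sum_congr rfl (fun j _ => ?_)
  rw [map_smul]
  simp [gradYg]

lemma li_iff_rank {l m : ℕ} (v : Fin l → Vec m) (J : Finset (Fin l)) :
    LinearIndependent ℝ (fun i : J => v i) ↔
      Module.finrank ℝ (Submodule.span ℝ (v '' (J : Set (Fin l)))) = J.card := by
  rw [linearIndependent_iff_card_eq_finrank_span]
  rw [show Set.range (fun i : J => v i) = v '' (J : Set (Fin l)) from
    (Set.image_eq_range v (J : Set (Fin l))).symm]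
  rw [Set.finrank, Fintype.card_coe]
  exact eq_comm

noncomputable def fsupp {l : ℕ} (lam : Vec l) : Finset (Fin l) :=
  Finset.univ.filter (fun i => lam i ≠ 0)

lemma mem_fsupp {l : ℕ} {lam : Vec l} {i : Fin l} : i ∈ fsupp lam ↔ lam i ≠ 0 := by
  simp [fsupp]

lemma conic_reduction {l m : ℕ} (v : Fin l → Vec m) :
    ∀ (N : ℕ) (lam : Vec l), (fsupp lam).card ≤ N → (∀ i, 0 ≤ lam i) →
    ∃ mu : Vec l, (∀ i, 0 ≤ mu i) ∧ (∀ i, mu i ≠ 0 → lam i ≠ 0) ∧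
      (∀ j, ∑ i, mu i * v i j = ∑ i, lam i * v i j) ∧
      LinearIndependent ℝ (fun i : (fsupp mu) => v i) := by
  intro N
  induction N with
  | zero =>
    intro lam hcard hpos
    refine ⟨lam, hpos, fun i h => h, fun j => rfl, ?_⟩
    have he : fsupp lam = ∅ := Finset.card_eq_zero.mp (Nat.le_zero.mp hcard)
    haveI : IsEmpty (fsupp lam) := by rw [he]; exact Finset.isEmpty_coe_sort.mpr rfl
    exact linearIndependent_empty_type
  | succ N ih =>
    intro lam hcard hpos
    by_cases hLI : LinearIndependent ℝ (fun i : fsupp lam => v i)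
    · exact ⟨lam, hpos, fun i h => h, fun j => rfl, hLI⟩
    obtain ⟨c, hc0, i1, hi1⟩ := Fintype.not_linearIndependent_iff.mp hLI
    set cb0 : Vec l := fun i => if h : i ∈ fsupp lam then c ⟨i, h⟩ else 0 with hcb0
    have hcb0supp : ∀ i, cb0 i ≠ 0 → lam i ≠ 0 := by
      intro i hi
      by_contra h0
      have : i ∉ fsupp lam := by simp [mem_fsupp, h0]
      simp [hcb0, this] at hi
    have hcb0sum : ∑ i, cb0 i • v i = 0 := by
      rw [← Finset.sum_subset (Finset.subset_univ (fsupp lam))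
        (fun i _ hi => by simp [hcb0, hi])]
      rw [← Finset.sum_attach (fsupp lam) (fun i => cb0 i • v i)]
      rw [← hc0]
      refine Finset.sum_congr rfl (fun i _ => ?_)
      simp [hcb0, i.2]
    have hcb0i1 : cb0 (i1 : Fin l) ≠ 0 := by
      simpa [hcb0, i1.2, Finset.coe_mem] using hi1
    obtain ⟨cb, hcbsupp, hcbsum, icb, hicb⟩ :
        ∃ cb : Vec l, (∀ i, cb i ≠ 0 → lam i ≠ 0) ∧ (∑ i, cb i • v i = 0) ∧
          ∃ i, 0 < cb i := by
      rcases lt_or_gt_of_ne hcb0i1 with h | h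
      · refine ⟨-cb0, fun i hi => hcb0supp i (by simpa using hi), ?_, ⟨i1, by simpa using h⟩⟩
        simp only [Pi.neg_apply, neg_smul, Finset.sum_neg_distrib, hcb0sum, neg_zero]
      · exact ⟨cb0, hcb0supp, hcb0sum, ⟨i1, h⟩⟩
    set T : Finset (Fin l) := (fsupp lam).filter (fun i => 0 < cb i) with hT
    have hTne : T.Nonempty := ⟨icb, by
      simp only [hT, Finset.mem_filter, mem_fsupp]
      exact ⟨hcbsupp icb (ne_of_gt hicb), hicb⟩⟩
    obtain ⟨i0, hi0T, hmin⟩ := T.exists_min_image (fun i => lam i / cb i) hTne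
    have hi0supp : lam i0 ≠ 0 := mem_fsupp.mp (Finset.mem_filter.mp hi0T).1
    have hi0pos : 0 < cb i0 := (Finset.mem_filter.mp hi0T).2
    set θ : ℝ := lam i0 / cb i0 with hθ
    have hθ0 : 0 ≤ θ := div_nonneg (hpos i0) hi0pos.le
    set mu' : Vec l := fun i => lam i - θ * cb i with hmu'
    have hmu'pos : ∀ i, 0 ≤ mu' i := by
      intro i
      rcases le_or_gt (cb i) 0 with h | h
      · have h2 : θ * cb i ≤ 0 := mul_nonpos_of_nonneg_of_nonpos hθ0 h
        simp only [hmu', sub_nonneg]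
        exact h2.trans (hpos i)
      · have hiT : i ∈ T :=
          Finset.mem_filter.mpr ⟨mem_fsupp.mpr (hcbsupp i (ne_of_gt h)), h⟩
        have h3 := hmin i hiT
        simp only [hmu', sub_nonneg]
        calc θ * cb i ≤ (lam i / cb i) * cb i := mul_le_mul_of_nonneg_right h3 h.le
          _ = lam i := by field_simp
    have hmu'supp : ∀ i, mu' i ≠ 0 → lam i ≠ 0 := by
      intro i hi
      by_contra h0
      have hcb : cb i = 0 := by
        by_contra hc
        exact (hcbsupp i hc) h0
      simp [hmu', h0, hcb] at hi
    have hmu'i0 : mu' i0 = 0 := by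
      simp only [hmu', hθ]
      field_simp
      ring
    have hsubset : fsupp mu' ⊆ (fsupp lam).erase i0 := by
      intro i hi
      rw [Finset.mem_erase]
      refine ⟨?_, mem_fsupp.mpr (hmu'supp i (mem_fsupp.mp hi))⟩
      rintro rfl
      exact (mem_fsupp.mp hi) hmu'i0
    have hcard' : (fsupp mu').card ≤ N := by
      have h1 := Finset.card_le_card hsubset
      have h2 : ((fsupp lam).erase i0).card = (fsupp lam).card - 1 :=
        Finset.card_erase_of_mem (mem_fsupp.mpr hi0supp)
      omega
    have hsum' : ∀ j, ∑ i, mu' i * v i j = ∑ i, lam i * v i j := by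
      intro j
      have h0 : ∑ i, cb i * v i j = 0 := by
        have h1 := congrFun hcbsum j
        simpa [Finset.sum_apply] using h1
      calc ∑ i, mu' i * v i j = ∑ i, (lam i * v i j - θ * (cb i * v i j)) := by
            refine Finset.sum_congr rfl (fun i _ => ?_); simp only [hmu']; ring
        _ = ∑ i, lam i * v i j - θ * ∑ i, cb i * v i j := by
            rw [Finset.sum_sub_distrib, Finset.mul_sum]
        _ = ∑ i, lam i * v i j := by rw [h0]; ring
    obtain ⟨mu, h1, h2, h3, h4⟩ := ih mu' hcard' hmu'pos
    exact ⟨mu, h1, fun i hi => hmu'supp i (h2 i hi),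
      fun j => (h3 j).trans (hsum' j), h4⟩

lemma exists_const_subseq {α : Type*} [Fintype α] [DecidableEq α] (f : ℕ → α) :
    ∃ (a : α) (φ : ℕ → ℕ), StrictMono φ ∧ ∀ k, f (φ k) = a := by
  have hex : ∃ a, ∃ᶠ k in atTop, f k = a := by
    by_contra h
    push_neg at h
    have h2 : ∀ a : α, ∀ᶠ k in atTop, f k ≠ a := by
      intro a
      have := h a
      exact this
    have h3 : ∀ᶠ k in atTop, ∀ a : α, f k ≠ a := Filter.eventually_all.mpr h2
    obtain ⟨k, hk⟩ := h3.exists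
    exact hk (f k) rfl
  obtain ⟨a, ha⟩ := hex
  obtain ⟨φ, hφ, h⟩ := Filter.extraction_of_frequently_atTop ha
  exact ⟨a, φ, hφ, h⟩

lemma exists_unbounded_subseq {E : Type*} [NormedAddCommGroup E] (x : ℕ → E)
    (h : ¬ ∃ C : ℝ, ∀ k, ‖x k‖ ≤ C) :
    ∃ φ : ℕ → ℕ, StrictMono φ ∧ Tendsto (fun k => ‖x (φ k)‖) atTop atTop := by
  push_neg at h
  have hfreq : ∀ nn : ℕ, ∃ᶠ k in atTop, (nn : ℝ) < ‖x k‖ := by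
    intro nn
    rw [Filter.frequently_atTop]
    intro N
    obtain ⟨k, hk⟩ := h (max (nn : ℝ) (((Finset.range (N+1)).image (fun j => ‖x j‖)).max'
      (by exact ⟨‖x 0‖, Finset.mem_image.mpr ⟨0, Finset.mem_range.mpr (by omega), rfl⟩⟩)))
    refine ⟨k, ?_, lt_of_le_of_lt (le_max_left _ _) hk⟩
    by_contra hlt
    push_neg at hlt
    have hle : ‖x k‖ ≤ ((Finset.range (N+1)).image (fun j => ‖x j‖)).max'
        (by exact ⟨‖x 0‖, Finset.mem_image.mpr ⟨0, Finset.mem_range.mpr (by omega), rfl⟩⟩) := by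
      apply Finset.le_max'
      exact Finset.mem_image.mpr ⟨k, Finset.mem_range.mpr (by omega), rfl⟩
    exact absurd hk (not_lt.mpr (hle.trans (le_max_right _ _)))
  obtain ⟨φ, hφ, hx⟩ := Filter.extraction_forall_of_frequently hfreq
  refine ⟨φ, hφ, ?_⟩
  apply tendsto_atTop_mono (fun k => (hx k).le)
  exact tendsto_natCast_atTop_atTop

end Helpers
section Helpers2

variable {n m l : ℕ} {F : Vec n × Vec m → Vec m} {g : Vec n × Vec m → Vec l}
  {Z : Set (Vec n × Vec m)}

lemma feas_g_nonpos {z : Vec n × Vec m} (hz : z ∈ feasSet F g Z) (i : Fin l) :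
    g z i ≤ 0 := by
  have h := hz.2.1 i
  rwa [Prod.mk.eta] at h

lemma mult_compl {z : Vec n × Vec m} (hz : z ∈ feasSet F g Z)
    {lam : Vec l} (hlam : lam ∈ multSet F g z) {i : Fin l} (hi : lam i ≠ 0) :
    g z i = 0 := by
  have hterm : ∀ i ∈ Finset.univ, lam i * g z i ≤ 0 := fun i _ =>
    mul_nonpos_of_nonneg_of_nonpos (hlam.1 i) (feas_g_nonpos hz i)
  have h0 := (Finset.sum_eq_zero_iff_of_nonpos hterm).mp hlam.2.2 i (Finset.mem_univ i)
  rcases mul_eq_zero.mp h0 with h | h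
  · exact absurd h hi
  · exact h

/-- From any multiplier, produce one with linearly independent support. -/
lemma mult_reduce {z : Vec n × Vec m} (hz : z ∈ feasSet F g Z)
    (hne : (multSet F g z).Nonempty) :
    ∃ mu ∈ multSet F g z,
      LinearIndependent ℝ (fun i : (fsupp mu) => gradYg g i z) := by
  obtain ⟨lam, hlam⟩ := hne
  obtain ⟨mu, hpos, hsupp, hsum, hLI⟩ := conic_reduction (fun i => gradYg g i z) l lam
    (le_trans (Finset.card_le_univ _) (by simp)) hlam.1
  refine ⟨mu, ⟨hpos, ?_, ?_⟩, hLI⟩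
  · intro j
    rw [hsum j]
    exact hlam.2.1 j
  · refine Finset.sum_eq_zero (fun i _ => ?_)
    by_cases h : mu i = 0
    · simp [h]
    · rw [mult_compl hz hlam (hsupp i h), mul_zero]

/-- Boundedness of constant-support multipliers whose support gradients are
linearly independent in the limit. -/
lemma mult_bounded (hF : ContDiff ℝ 1 F) (hg : ContDiff ℝ 2 g)
    {zbar : Vec n × Vec m} {zs : ℕ → Vec n × Vec m}
    (hz : Tendsto zs atTop (𝓝 zbar))
    {lams : ℕ → Vec l} {J : Finset (Fin l)}
    (hpos : ∀ k i, 0 ≤ lams k i)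
    (hstat : ∀ k j, F (zs k) j + ∑ i, lams k i * gradYg g i (zs k) j = 0)
    (hsupp : ∀ k, fsupp (lams k) = J)
    (hLIbar : LinearIndependent ℝ (fun i : J => gradYg g i zbar)) :
    ∃ C : ℝ, ∀ k, ‖lams k‖ ≤ C := by
  by_contra hub
  obtain ⟨φ, hφ, hnorm⟩ := exists_unbounded_subseq lams hub
  -- shift so that norms are ≥ 1
  obtain ⟨k1, hk1⟩ := (hnorm.eventually_ge_atTop 1).exists_forall_of_atTop
  set ψ : ℕ → ℕ := fun k => φ (k + k1) with hψ
  have hν1 : ∀ k, 1 ≤ ‖lams (ψ k)‖ := fun k => hk1 (k + k1) (by omega)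
  have hνpos : ∀ k, 0 < ‖lams (ψ k)‖ := fun k => lt_of_lt_of_le one_pos (hν1 k)
  set ν : ℕ → Vec l := fun k => ‖lams (ψ k)‖⁻¹ • lams (ψ k) with hν
  have hνnorm : ∀ k, ‖ν k‖ = 1 := by
    intro k
    rw [hν]
    simp only [norm_smul, norm_inv, norm_norm]
    exact inv_mul_cancel₀ (ne_of_gt (hνpos k))
  have hνball : ∀ k, ν k ∈ Metric.closedBall (0 : Vec l) 1 := by
    intro k
    rw [Metric.mem_closedBall, dist_zero_right, hνnorm k]
  obtain ⟨νbar, _, φ2, hφ2, hνlim⟩ :=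
    tendsto_subseq_of_bounded Metric.isBounded_closedBall hνball
  -- the composed point sequence
  set zsc : ℕ → Vec n × Vec m := fun k => zs (ψ (φ2 k)) with hzsc
  have hzc : Tendsto zsc atTop (𝓝 zbar) := by
    refine hz.comp ?_
    exact (hφ.comp (strictMono_id.add_const k1)).comp hφ2 |>.tendsto_atTop
  have hνi : ∀ i, Tendsto (fun k => ν (φ2 k) i) atTop (𝓝 (νbar i)) := by
    intro i
    exact (tendsto_pi_nhds.mp hνlim) i
  -- norm of νbar is 1
  have hνbarnorm : ‖νbar‖ = 1 := by
    have h1 : Tendsto (fun k => ‖ν (φ2 k)‖) atTop (𝓝 ‖νbar‖) :=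
      (continuous_norm.tendsto νbar).comp hνlim
    have h2 : Tendsto (fun k => ‖ν (φ2 k)‖) atTop (𝓝 1) := by
      refine tendsto_const_nhds.congr (fun k => ?_)
      rw [hνnorm (φ2 k)]
    exact tendsto_nhds_unique h1 h2
  -- νbar vanishes off J
  have hνbarJ : ∀ i ∉ J, νbar i = 0 := by
    intro i hi
    have hlz : ∀ k, lams (ψ (φ2 k)) i = 0 := by
      intro k
      by_contra h0
      exact hi ((hsupp (ψ (φ2 k))) ▸ mem_fsupp.mpr h0)
    have h1 : Tendsto (fun k => ν (φ2 k) i) atTop (𝓝 0) := by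
      refine tendsto_const_nhds.congr (fun k => Eq.symm ?_)
      simp only [hν, Pi.smul_apply, smul_eq_mul]
      rw [hlz k, mul_zero]
    exact tendsto_nhds_unique (hνi i) h1
  -- limiting dependence relation
  have hdep : ∀ j, ∑ i, νbar i * gradYg g i zbar j = 0 := by
    intro j
    have hinv : Tendsto (fun k => ‖lams (ψ (φ2 k))‖⁻¹) atTop (𝓝 0) := by
      refine Tendsto.inv_tendsto_atTop ?_
      refine (hnorm.comp ?_)
      exact ((strictMono_id.add_const k1).comp hφ2).tendsto_atTop
    have hFj : Tendsto (fun k => F (zsc k) j) atTop (𝓝 (F zbar j)) :=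
      (((continuous_apply j).comp hF.continuous).tendsto zbar).comp hzc
    have h1 : Tendsto (fun k => ∑ i, ν (φ2 k) i * gradYg g i (zsc k) j) atTop
        (𝓝 (∑ i, νbar i * gradYg g i zbar j)) := by
      refine tendsto_finset_sum _ (fun i _ => ?_)
      exact (hνi i).mul ((((contDiff_gradYg hg i j).continuous).tendsto zbar).comp hzc)
    have h2 : Tendsto (fun k => ∑ i, ν (φ2 k) i * gradYg g i (zsc k) j) atTop (𝓝 0) := by
      have heq : ∀ k, ∑ i, ν (φ2 k) i * gradYg g i (zsc k) j =
          ‖lams (ψ (φ2 k))‖⁻¹ * (-(F (zsc k) j)) := by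
        intro k
        have hs := hstat (ψ (φ2 k)) j
        have : ∑ i, lams (ψ (φ2 k)) i * gradYg g i (zsc k) j = -(F (zsc k) j) := by
          rw [hzsc]; linarith [hs]
        rw [hν]
        simp only [Pi.smul_apply, smul_eq_mul]
        rw [← this, Finset.mul_sum]
        exact Finset.sum_congr rfl (fun i _ => by ring)
      have := hinv.mul (hFj.neg)
      rw [zero_mul] at this
      exact this.congr (fun k => (heq k).symm)
    exact tendsto_nhds_unique h1 h2
  -- contradiction with linear independence
  have hcoef : ∀ i : J, νbar i = 0 := by
    have hsum0 : ∑ i : J, νbar i • gradYg g (i : Fin l) zbar = 0 := by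
      ext j
      have h1 : ∑ i, νbar i * gradYg g i zbar j = 0 := hdep j
      rw [← Finset.sum_subset (Finset.subset_univ J)
        (fun i _ hi => by rw [hνbarJ i hi, zero_mul])] at h1
      rw [← Finset.sum_attach J (fun i => νbar i * gradYg g i zbar j)] at h1
      simpa [Finset.sum_apply] using h1
    exact Fintype.linearIndependent_iff.mp hLIbar (fun i => νbar i) hsum0
  have hzero : νbar = 0 := by
    funext i
    by_cases hi : i ∈ J
    · exact hcoef ⟨i, hi⟩
    · exact hνbarJ i hi
  rw [hzero, norm_zero] at hνbarnorm
  norm_num at hνbarnorm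

end Helpers2
/-- Proposition 3.2.2 (inclusion part): under CRCQ, every tangent direction
`dz = (dx, dy) ∈ T(z̄; 𝓕)` lies in `T(z̄; Z)` and there is an extreme point `λ̄` of the
multiplier polyhedron `M(z̄)` such that `dy` solves
`AVI(∇_x L(z̄,λ̄) dx, ∇_y L(z̄,λ̄), K(z̄,λ̄;dx))`; i.e. `T(z̄;𝓕) ⊆ 𝓛^e(z̄;𝓕)`. -/
theorem stmt_3 {n m l : ℕ}
    (F : Vec n × Vec m → Vec m) (g : Vec n × Vec m → Vec l)
    (Z : Set (Vec n × Vec m))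
    (hF : ContDiff ℝ 1 F) (hg : ContDiff ℝ 2 g)
    (zbar : Vec n × Vec m) (hzbar : zbar ∈ feasSet F g Z)
    (U : Set (Vec n × Vec m)) (hU : U ∈ 𝓝 zbar)
    (hCRCQ : CRCQ g zbar U)
    (hMne : ∀ z ∈ feasSet F g Z ∩ U, (multSet F g z).Nonempty)
    (dz : Vec n × Vec m) (hdz : dz ∈ tangentCone (feasSet F g Z) zbar) :
    dz ∈ tangentCone Z zbar ∧
    ∃ lam ∈ (multSet F g zbar).extremePoints ℝ, solvesAVI F g zbar lam dz.1 dz.2 := by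
  obtain ⟨zs0, ts0, hmem0, hz0, htpos0, ht0, hquot0⟩ := hdz
  refine ⟨⟨zs0, ts0, fun k => (hmem0 k).1, hz0, htpos0, ht0, hquot0⟩, ?_⟩
  -- ### Step 1: shift into U
  obtain ⟨k0, hk0⟩ := eventually_atTop.mp (hz0.eventually_mem hU)
  have hφa : StrictMono (fun k : ℕ => k + k0) := fun a b hab => by simpa using hab
  set zsA : ℕ → Vec n × Vec m := fun k => zs0 (k + k0) with hzsA
  set tsA : ℕ → ℝ := fun k => ts0 (k + k0) with htsA
  have hmemA : ∀ k, zsA k ∈ feasSet F g Z := fun k => hmem0 _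
  have hUA : ∀ k, zsA k ∈ U := fun k => hk0 _ (by omega)
  have hzA : Tendsto zsA atTop (𝓝 zbar) := hz0.comp hφa.tendsto_atTop
  have htposA : ∀ k, 0 < tsA k := fun k => htpos0 _
  have htA : Tendsto tsA atTop (𝓝 0) := ht0.comp hφa.tendsto_atTop
  have hquotA : Tendsto (fun k => (tsA k)⁻¹ • (zsA k - zbar)) atTop (𝓝 dz) :=
    hquot0.comp hφa.tendsto_atTop
  -- ### Step 2: reduced multipliers
  have hMultA : ∀ k, ∃ mu ∈ multSet F g (zsA k),
      LinearIndependent ℝ (fun i : (fsupp mu) => gradYg g i (zsA k)) :=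
    fun k => mult_reduce (hmemA k) (hMne _ ⟨hmemA k, hUA k⟩)
  choose lamA hlamA hLIA using hMultA
  -- ### Step 3: constant support
  obtain ⟨J, φb, hφb, hJb⟩ := exists_const_subseq (fun k => fsupp (lamA k))
  set zsB : ℕ → Vec n × Vec m := fun k => zsA (φb k) with hzsB
  set tsB : ℕ → ℝ := fun k => tsA (φb k) with htsB
  set lamB : ℕ → Vec l := fun k => lamA (φb k) with hlamBdef
  have hmemB : ∀ k, zsB k ∈ feasSet F g Z := fun k => hmemA _
  have hUB : ∀ k, zsB k ∈ U := fun k => hUA _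
  have hzB : Tendsto zsB atTop (𝓝 zbar) := hzA.comp hφb.tendsto_atTop
  have htposB : ∀ k, 0 < tsB k := fun k => htposA _
  have htB : Tendsto tsB atTop (𝓝 0) := htA.comp hφb.tendsto_atTop
  have hquotB : Tendsto (fun k => (tsB k)⁻¹ • (zsB k - zbar)) atTop (𝓝 dz) :=
    hquotA.comp hφb.tendsto_atTop
  have hlamB : ∀ k, lamB k ∈ multSet F g (zsB k) := fun k => hlamA _
  have hJB : ∀ k, fsupp (lamB k) = J := fun k => hJb k
  have hLIB : ∀ k, LinearIndependent ℝ (fun i : J => gradYg g i (zsB k)) :=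
    fun k => (hJb k) ▸ hLIA (φb k)
  -- indices in J are active along the sequence and at the limit
  have hgact : ∀ i ∈ J, ∀ k, g (zsB k) i = 0 := fun i hi k =>
    mult_compl (hmemB k) (hlamB k) (mem_fsupp.mp ((hJB k).symm ▸ hi))
  have hJact : ∀ i ∈ J, g zbar i = 0 := by
    intro i hi
    have h1 : Tendsto (fun k => g (zsB k) i) atTop (𝓝 (g zbar i)) :=
      (((continuous_apply i).comp hg.continuous).tendsto zbar).comp hzB
    have h2 : Tendsto (fun k => g (zsB k) i) atTop (𝓝 0) :=
      tendsto_const_nhds.congr (fun k => (hgact i hi k).symm)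
    exact tendsto_nhds_unique h1 h2
  -- linear independence at the limit, via CRCQ
  have hLIbar : LinearIndependent ℝ (fun i : J => gradYg g i zbar) := by
    refine (li_iff_rank (fun i => gradYg g i zbar) J).mpr ?_
    have h1 := hCRCQ (J : Set (Fin l)) (fun i hi => hJact i (Finset.mem_coe.mp hi))
      (zsB 0) (hUB 0)
    have h2 := (li_iff_rank (fun i => gradYg g i (zsB 0)) J).mp (hLIB 0)
    unfold gradRank at h1
    rw [← h1]
    exact h2
  -- ### Step 4: boundedness and convergence of multipliers
  obtain ⟨C, hC⟩ := mult_bounded hF hg hzB (fun k i => (hlamB k).1 i)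
    (fun k j => (hlamB k).2.1 j) hJB hLIbar
  have hball : ∀ k, lamB k ∈ Metric.closedBall (0 : Vec l) C := fun k => by
    rw [Metric.mem_closedBall, dist_zero_right]; exact hC k
  obtain ⟨lambar, _, φc, hφc, hlamlim⟩ :=
    tendsto_subseq_of_bounded Metric.isBounded_closedBall hball
  set zs : ℕ → Vec n × Vec m := fun k => zsB (φc k) with hzs
  set ts : ℕ → ℝ := fun k => tsB (φc k) with hts
  set lams : ℕ → Vec l := fun k => lamB (φc k) with hlamsdef
  have hmem : ∀ k, zs k ∈ feasSet F g Z := fun k => hmemB _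
  have hz : Tendsto zs atTop (𝓝 zbar) := hzB.comp hφc.tendsto_atTop
  have htpos : ∀ k, 0 < ts k := fun k => htposB _
  have hquot : Tendsto (fun k => (ts k)⁻¹ • (zs k - zbar)) atTop (𝓝 dz) :=
    hquotB.comp hφc.tendsto_atTop
  have hlams : ∀ k, lams k ∈ multSet F g (zs k) := fun k => hlamB _
  have hJs : ∀ k, fsupp (lams k) = J := fun k => hJB _
  have hlamtend : Tendsto lams atTop (𝓝 lambar) := hlamlim
  have hlami : ∀ i, Tendsto (fun k => lams k i) atTop (𝓝 (lambar i)) :=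
    fun i => (tendsto_pi_nhds.mp hlamtend) i
  have hgacts : ∀ i ∈ J, ∀ k, g (zs k) i = 0 := fun i hi k => hgact i hi (φc k)
  -- basic facts on lambar
  have hposbar : ∀ i, 0 ≤ lambar i := fun i =>
    ge_of_tendsto (hlami i) (Eventually.of_forall (fun k => (hlams k).1 i))
  have hsuppJ : ∀ i ∉ J, lambar i = 0 := by
    intro i hi
    refine tendsto_nhds_unique (hlami i) (tendsto_const_nhds.congr (fun k => ?_))
    by_contra h0
    exact hi ((hJs k) ▸ mem_fsupp.mpr (fun hq => h0 hq.symm))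
  -- ### derivative facts
  have hdGi : ∀ i : Fin l, DifferentiableAt ℝ (fun p => g p i) zbar :=
    fun i => ((contDiff_gi hg i).differentiable (by norm_num)).differentiableAt
  have hquotg : ∀ i : Fin l, Tendsto (fun k => (ts k)⁻¹ * (g (zs k) i - g zbar i)) atTop
      (𝓝 (fderiv ℝ (fun p => g p i) zbar dz)) :=
    fun i => tendsto_diffquot (hdGi i) hz hquot
  have hsplitg : ∀ i : Fin l, ∀ d : Vec n × Vec m,
      dgX g i zbar d.1 + dgY g i zbar d.2 = fderiv ℝ (fun p => g p i) zbar d := by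
    intro i d
    unfold dgX dgY
    rw [← clm_split]
  have hactive_le : ∀ i : Fin l, g zbar i = 0 →
      fderiv ℝ (fun p => g p i) zbar dz ≤ 0 := by
    intro i hgi
    refine le_of_tendsto (hquotg i) (Eventually.of_forall (fun k => ?_))
    rw [hgi, sub_zero]
    exact mul_nonpos_of_nonneg_of_nonpos (inv_nonneg.mpr (htpos k).le)
      (feas_g_nonpos (hmem k) i)
  have hJderiv : ∀ i ∈ J, fderiv ℝ (fun p => g p i) zbar dz = 0 := by
    intro i hi
    refine tendsto_nhds_unique (hquotg i) (tendsto_const_nhds.congr (fun k => ?_))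
    rw [hgacts i hi k, hJact i hi, sub_zero, mul_zero]
  -- ### lambar is a multiplier at zbar
  have hstatbar : ∀ j, F zbar j + ∑ i, lambar i * gradYg g i zbar j = 0 := by
    intro j
    have h1 : Tendsto (fun k => F (zs k) j + ∑ i, lams k i * gradYg g i (zs k) j) atTop
        (𝓝 (F zbar j + ∑ i, lambar i * gradYg g i zbar j)) := by
      refine Tendsto.add ((((continuous_apply j).comp hF.continuous).tendsto zbar).comp hz) ?_
      exact tendsto_finset_sum _ (fun i _ => (hlami i).mul
        (((contDiff_gradYg hg i j).continuous.tendsto zbar).comp hz))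
    have h2 : Tendsto (fun k => F (zs k) j + ∑ i, lams k i * gradYg g i (zs k) j) atTop
        (𝓝 0) := tendsto_const_nhds.congr (fun k => ((hlams k).2.1 j).symm)
    exact tendsto_nhds_unique h1 h2
  have hmembar : lambar ∈ multSet F g zbar := by
    refine ⟨hposbar, hstatbar, Finset.sum_eq_zero (fun i _ => ?_)⟩
    by_cases hi : lambar i = 0
    · rw [hi, zero_mul]
    · have hiJ : i ∈ J := by
        by_contra h
        exact hi (hsuppJ i h)
      rw [hJact i hiJ, mul_zero]
  -- ### lambar is an extreme point
  have hext : lambar ∈ (multSet F g zbar).extremePoints ℝ := by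
    refine ⟨hmembar, fun x1 hx1 x2 hx2 hseg => ?_⟩
    obtain ⟨a, b, ha, hb, hab, heq⟩ := hseg
    have hoffJ : ∀ i ∉ J, x1 i = 0 ∧ x2 i = 0 := by
      intro i hi
      have h0 : a * x1 i + b * x2 i = 0 := by
        have h1 := congrFun heq i
        simp only [Pi.add_apply, Pi.smul_apply, smul_eq_mul] at h1
        rw [h1, hsuppJ i hi]
      have h1 := hx1.1 i
      have h2 := hx2.1 i
      constructor <;> nlinarith
    have hx12 : x1 = x2 := by
      have hdep : ∀ j, ∑ i, (x1 i - x2 i) * gradYg g i zbar j = 0 := by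
        intro j
        have e1 := hx1.2.1 j
        have e2 := hx2.2.1 j
        have e3 : ∑ i, (x1 i - x2 i) * gradYg g i zbar j =
            ∑ i, x1 i * gradYg g i zbar j - ∑ i, x2 i * gradYg g i zbar j := by
          rw [← Finset.sum_sub_distrib]
          exact Finset.sum_congr rfl (fun i _ => by ring)
        rw [e3]
        linarith
      have hsum0 : ∑ i : J, (x1 (i : Fin l) - x2 (i : Fin l)) • gradYg g (i : Fin l) zbar
          = 0 := by
        ext j
        have h1 := hdep j
        rw [← Finset.sum_subset (Finset.subset_univ J)
          (fun i _ hi => by rw [(hoffJ i hi).1, (hoffJ i hi).2, sub_self, zero_mul])] at h1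
        rw [← Finset.sum_attach J (fun i => (x1 i - x2 i) * gradYg g i zbar j)] at h1
        simpa [Finset.sum_apply] using h1
      have hcoef := Fintype.linearIndependent_iff.mp hLIbar
        (fun i : J => x1 (i : Fin l) - x2 (i : Fin l)) hsum0
      funext i
      by_cases hiJ : i ∈ J
      · have h3 : x1 i - x2 i = 0 := hcoef ⟨i, hiJ⟩
        linarith [h3]
      · rw [(hoffJ i hiJ).1, (hoffJ i hiJ).2]
    have hx1lam : x1 = lambar := by
      funext i
      have h1 := congrFun heq i
      simp only [Pi.add_apply, Pi.smul_apply, smul_eq_mul] at h1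
      have h2 := congrFun hx12 i
      rw [← h1, ← h2, ← add_mul, hab, one_mul]
    exact hx1lam
  -- ### dz.2 solves the AVI
  refine ⟨lambar, hext, ?_, ?_⟩
  · -- dz.2 ∈ dirCrit
    intro i hgi
    constructor
    · intro _
      rw [hsplitg i (dz.1, dz.2)]
      exact hactive_le i hgi
    · intro hlipos
      have hiJ : i ∈ J := by
        by_contra h
        exact absurd (hsuppJ i h) (ne_of_gt hlipos)
      rw [hsplitg i (dz.1, dz.2)]
      exact hJderiv i hiJ
  · -- the AVI inequality
    intro v hv
    set w : Vec m := v - dz.2 with hw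
    have hdF : ∀ j, DifferentiableAt ℝ (fun z : Vec n × Vec m => F z j) zbar := fun j =>
      (((ContinuousLinearMap.proj j : Vec m →L[ℝ] ℝ).contDiff.comp hF).differentiable
        one_ne_zero).differentiableAt
    have hdgrad : ∀ (i : Fin l) (j : Fin m),
        DifferentiableAt ℝ (fun z => gradYg g i z j) zbar :=
      fun i j => ((contDiff_gradYg hg i j).differentiable one_ne_zero).differentiableAt
    have hdL : ∀ j, DifferentiableAt ℝ (fun z => viLag F g z lambar j) zbar := by
      intro j
      simp only [viLag]
      exact (hdF j).add (DifferentiableAt.fun_sum (fun i _ => (hdgrad i j).const_mul _))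
    have htarget : ∀ j, jacLx F g zbar lambar dz.1 j + jacLy F g zbar lambar dz.2 j
        = fderiv ℝ (fun z => viLag F g z lambar j) zbar dz := by
      intro j
      unfold jacLx jacLy
      rw [← clm_split]
    set Gf : Fin l → (Vec n × Vec m) → ℝ := fun i z => ∑ j, w j * gradYg g i z j with hGf
    have hdGf : ∀ i, DifferentiableAt ℝ (Gf i) zbar := fun i =>
      DifferentiableAt.fun_sum (fun j _ => ((hdgrad i j).const_mul _))
    have hGfbar : ∀ i, Gf i zbar = fderiv ℝ (fun p => g p i) zbar ((0 : Vec n), w) :=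
      fun i => (fderiv_y_expand i zbar w).symm
    have hdec : ∀ i : Fin l, Gf i zbar
        = (dgX g i zbar dz.1 + dgY g i zbar v) - (dgX g i zbar dz.1 + dgY g i zbar dz.2) := by
      intro i
      rw [hGfbar i]
      unfold dgX dgY
      have hsub : ((0 : Vec n), w) = (((0 : Vec n), v) : Vec n × Vec m) - ((0 : Vec n), dz.2) := by
        rw [Prod.mk_sub_mk, sub_zero, hw]
      rw [hsub, map_sub]
      ring
    have hzero2 : ∀ i ∈ J, dgX g i zbar dz.1 + dgY g i zbar dz.2 = 0 := by
      intro i hiJ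
      rw [hsplitg i dz]
      exact hJderiv i hiJ
    have hGsign0 : ∀ i ∈ J, lambar i = 0 → Gf i zbar ≤ 0 := by
      intro i hiJ hlz
      have h4 : dgX g i zbar dz.1 + dgY g i zbar v ≤ 0 := (hv i (hJact i hiJ)).1 hlz
      rw [hdec i, hzero2 i hiJ, sub_zero]
      exact h4
    have hGsignp : ∀ i ∈ J, lambar i ≠ 0 → Gf i zbar = 0 := by
      intro i hiJ hlz
      have h4 : dgX g i zbar dz.1 + dgY g i zbar v = 0 :=
        (hv i (hJact i hiJ)).2 (lt_of_le_of_ne (hposbar i) (Ne.symm hlz))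
      rw [hdec i, hzero2 i hiJ, sub_zero, h4]
    -- the quotient sums
    have hquotL : ∀ j, Tendsto (fun k => (ts k)⁻¹ *
        (viLag F g (zs k) lambar j - viLag F g zbar lambar j)) atTop
        (𝓝 (fderiv ℝ (fun z => viLag F g z lambar j) zbar dz)) :=
      fun j => tendsto_diffquot (hdL j) hz hquot
    have hS : Tendsto (fun k => ∑ j, ((ts k)⁻¹ *
        (viLag F g (zs k) lambar j - viLag F g zbar lambar j)) * w j) atTop
        (𝓝 (dotp (jacLx F g zbar lambar dz.1 + jacLy F g zbar lambar dz.2) w)) := by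
      have h1 := tendsto_finset_sum Finset.univ (fun j (_ : j ∈ Finset.univ) =>
        (hquotL j).mul_const (w j))
      have heqlim : dotp (jacLx F g zbar lambar dz.1 + jacLy F g zbar lambar dz.2) w
          = ∑ j, (fderiv ℝ (fun z => viLag F g z lambar j) zbar dz) * w j := by
        unfold dotp
        exact Finset.sum_congr rfl (fun j _ => by rw [Pi.add_apply, htarget j])
      rw [heqlim]
      exact h1
    have hLzs : ∀ k j, viLag F g (zs k) lambar j - viLag F g zbar lambar j
        = ∑ i, (lambar i - lams k i) * gradYg g i (zs k) j := by
      intro k j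
      have hs := (hlams k).2.1 j
      have h0 : viLag F g zbar lambar j = 0 := hstatbar j
      rw [h0, sub_zero]
      have e3 : ∑ i, (lambar i - lams k i) * gradYg g i (zs k) j
          = ∑ i, lambar i * gradYg g i (zs k) j - ∑ i, lams k i * gradYg g i (zs k) j := by
        rw [← Finset.sum_sub_distrib]
        exact Finset.sum_congr rfl (fun i _ => by ring)
      rw [e3]
      unfold viLag
      linarith
    have hSQ : ∀ k, (∑ j, ((ts k)⁻¹ *
        (viLag F g (zs k) lambar j - viLag F g zbar lambar j)) * w j)
        = (ts k)⁻¹ * ∑ i, (lambar i - lams k i) * Gf i (zs k) := by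
      intro k
      calc (∑ j, ((ts k)⁻¹ * (viLag F g (zs k) lambar j - viLag F g zbar lambar j)) * w j)
          = ∑ j, ∑ i, (ts k)⁻¹ * ((lambar i - lams k i) * (w j * gradYg g i (zs k) j)) := by
            refine Finset.sum_congr rfl (fun j _ => ?_)
            rw [hLzs k j, Finset.mul_sum, Finset.sum_mul]
            exact Finset.sum_congr rfl (fun i _ => by ring)
        _ = ∑ i, ∑ j, (ts k)⁻¹ * ((lambar i - lams k i) * (w j * gradYg g i (zs k) j)) :=
            Finset.sum_comm
        _ = (ts k)⁻¹ * ∑ i, (lambar i - lams k i) * Gf i (zs k) := by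
            simp only [hGf, Finset.mul_sum]
    have hsplitQ : ∀ k, (ts k)⁻¹ * ∑ i, (lambar i - lams k i) * Gf i (zs k)
        = (ts k)⁻¹ * ∑ i, (lambar i - lams k i) * Gf i zbar
          + ∑ i, (lambar i - lams k i) * ((ts k)⁻¹ * (Gf i (zs k) - Gf i zbar)) := by
      intro k
      simp only [Finset.mul_sum]
      rw [← Finset.sum_add_distrib]
      exact Finset.sum_congr rfl (fun i _ => by ring)
    have hP : ∀ k, 0 ≤ (ts k)⁻¹ * ∑ i, (lambar i - lams k i) * Gf i zbar := by
      intro k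
      refine mul_nonneg (inv_nonneg.mpr (htpos k).le) (Finset.sum_nonneg (fun i _ => ?_))
      by_cases hiJ : i ∈ J
      · by_cases hlz : lambar i = 0
        · have h1 : 0 ≤ lams k i := (hlams k).1 i
          have h2 := hGsign0 i hiJ hlz
          nlinarith
        · rw [hGsignp i hiJ hlz, mul_zero]
      · have h1 : lambar i = 0 := hsuppJ i hiJ
        have h2 : lams k i = 0 := by
          by_contra h0
          exact hiJ ((hJs k) ▸ mem_fsupp.mpr h0)
        rw [h1, h2]
        norm_num
    have hE : Tendsto (fun k => ∑ i, (lambar i - lams k i) *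
        ((ts k)⁻¹ * (Gf i (zs k) - Gf i zbar))) atTop (𝓝 0) := by
      have h1 : ∀ i : Fin l, Tendsto (fun k => (lambar i - lams k i) *
          ((ts k)⁻¹ * (Gf i (zs k) - Gf i zbar))) atTop (𝓝 0) := by
        intro i
        have h2 : Tendsto (fun k => lambar i - lams k i) atTop (𝓝 0) := by
          have h2' := (tendsto_const_nhds (x := lambar i) (f := atTop)).sub (hlami i)
          rwa [sub_self] at h2'
        have h3 := tendsto_diffquot (hdGf i) hz hquot
        have h4 := h2.mul h3
        rwa [zero_mul] at h4
      have h5 := tendsto_finset_sum Finset.univ (fun i (_ : i ∈ Finset.univ) => h1 i)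
      simpa using h5
    have hfin : Tendsto (fun k => (ts k)⁻¹ * ∑ i, (lambar i - lams k i) * Gf i zbar) atTop
        (𝓝 (dotp (jacLx F g zbar lambar dz.1 + jacLy F g zbar lambar dz.2) w)) := by
      have h1 := hS.sub hE
      rw [sub_zero] at h1
      refine h1.congr (fun k => ?_)
      rw [hSQ k, hsplitQ k]
      ring
    exact ge_of_tendsto hfin (Eventually.of_forall hP)
end
end

section
/- (Proposition 3.2.3, part 1.) Assume the MPEC setup with F and g continuously differentiable, let z̄ ∈ 𝓕 with M(z̄) nonempty, let dx ∈ ℝ^n, and let λ ∈ M(z̄). Then the directional critical set K(z̄, λ; dx) is nonempty if and only if λ is an optimal solution of the linear program: maximize Σ_{i=1}^{ℓ} λ'_i ⟨∇_x g_i(z̄), dx⟩ over λ' ∈ M(z̄). -/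
open Filter Topology BigOperators

noncomputable section

variable {n m l : ℕ}

section FarkasAuxSection
open RealInnerProductSpace

namespace FarkasDev

variable {V : Type*} [AddCommGroup V] [Module ℝ V]

/-- One reduction step: a nontrivial nonneg relation allows dropping an index. -/
lemma carath_step {α : Type*} [DecidableEq α] (v : α → V) (s : Finset α)
    (μ w : α → ℝ) (hμ : ∀ i ∈ s, 0 ≤ μ i)
    (hw : ∑ i ∈ s, w i • v i = 0) (i₁ : α) (hi₁ : i₁ ∈ s) (hw₁ : 0 < w i₁) :
    ∃ i₀ ∈ s, ∃ μ' : α → ℝ, (∀ i ∈ s, 0 ≤ μ' i) ∧ μ' i₀ = 0 ∧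
      ∑ i ∈ s.erase i₀, μ' i • v i = ∑ i ∈ s, μ i • v i := by
  classical
  set P : Finset α := s.filter (fun i => 0 < w i) with hP
  have hPne : P.Nonempty := ⟨i₁, by simp [hP, hi₁, hw₁]⟩
  obtain ⟨i₀, hi₀P, hi₀⟩ := Finset.exists_mem_eq_inf' hPne (fun i => μ i / w i)
  have hi₀s : i₀ ∈ s := (Finset.mem_filter.mp hi₀P).1
  have hwi₀ : 0 < w i₀ := (Finset.mem_filter.mp hi₀P).2
  set r : ℝ := P.inf' hPne (fun i => μ i / w i) with hr
  have hr0 : 0 ≤ r := by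
    rw [hi₀]; exact div_nonneg (hμ _ hi₀s) hwi₀.le
  set μ' : α → ℝ := fun i => μ i - r * w i with hμ'
  have hμ'0 : ∀ i ∈ s, 0 ≤ μ' i := by
    intro i his
    by_cases hwi : 0 < w i
    · have : r ≤ μ i / w i := Finset.inf'_le _ (by simp [hP, his, hwi])
      have := (le_div_iff₀ hwi).mp this
      simp only [hμ']; linarith
    · have : r * w i ≤ 0 := mul_nonpos_of_nonneg_of_nonpos hr0 (not_lt.mp hwi)
      have := hμ i his
      simp only [hμ']; linarith
  have hμ'i₀ : μ' i₀ = 0 := by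
    simp only [hμ', hi₀]
    field_simp
    ring
  refine ⟨i₀, hi₀s, μ', hμ'0, hμ'i₀, ?_⟩
  have h1 : ∑ i ∈ s.erase i₀, μ' i • v i = ∑ i ∈ s, μ' i • v i := by
    rw [← Finset.add_sum_erase s _ hi₀s, hμ'i₀, zero_smul, zero_add]
  rw [h1]
  have : ∀ i ∈ s, μ' i • v i = μ i • v i - r • (w i • v i) := by
    intro i _
    simp only [hμ', sub_smul, smul_smul]
  rw [Finset.sum_congr rfl this, Finset.sum_sub_distrib, ← Finset.smul_sum, hw, smul_zero,
    sub_zero]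

/-- Conic Carathéodory: any nonneg combination is a nonneg combination over a
linearly independent subfamily. -/
lemma carath {α : Type*} [DecidableEq α] (v : α → V) (s : Finset α) :
    ∀ μ : α → ℝ, (∀ i ∈ s, 0 ≤ μ i) →
    ∃ t : Finset α, t ⊆ s ∧ LinearIndependent ℝ (fun i : t => v i) ∧
      ∃ ν : α → ℝ, (∀ i, 0 ≤ ν i) ∧ ∑ i ∈ t, ν i • v i = ∑ i ∈ s, μ i • v i := by
  classical
  induction s using Finset.strongInduction with
  | _ s ih =>
    intro μ hμ
    by_cases hind : LinearIndependent ℝ (fun i : s => v i)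
    · refine ⟨s, subset_rfl, hind, fun i => max (μ i) 0, fun i => le_max_right _ _, ?_⟩
      exact Finset.sum_congr rfl fun i his => by simp only []; rw [show max (μ i) 0 = μ i from max_eq_left (hμ i his)]
    · obtain ⟨gg, hgg, j, hj⟩ := Fintype.not_linearIndependent_iff.mp hind
      set w : α → ℝ := fun i => if h : i ∈ s then gg ⟨i, h⟩ else 0 with hwdef
      have hwsum : ∑ i ∈ s, w i • v i = 0 := by
        rw [← Finset.sum_attach s (fun i => w i • v i)]
        rw [← hgg]
        exact Finset.sum_congr rfl fun i _ => by simp [hwdef]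
      have hwj : w (j : α) ≠ 0 := by simp [hwdef, hj]
      have key : ∀ w' : α → ℝ, (∑ i ∈ s, w' i • v i = 0) → ∀ i₁ ∈ s, 0 < w' i₁ →
          ∃ t : Finset α, t ⊆ s ∧ LinearIndependent ℝ (fun i : t => v i) ∧
          ∃ ν : α → ℝ, (∀ i, 0 ≤ ν i) ∧ ∑ i ∈ t, ν i • v i = ∑ i ∈ s, μ i • v i := by
        intro w' hw' i₁ hi₁ hpos
        obtain ⟨i₀, hi₀s, μ', hμ'0, hμ'i₀, hsum⟩ :=
          carath_step v s μ w' hμ hw' i₁ hi₁ hpos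
        obtain ⟨t, hts, hind', ν, hν, hνsum⟩ :=
          ih (s.erase i₀) (Finset.erase_ssubset hi₀s) μ'
            (fun i hi => hμ'0 i (Finset.mem_of_mem_erase hi))
        exact ⟨t, hts.trans (Finset.erase_subset _ _), hind', ν, hν, by rw [hνsum, hsum]⟩
      rcases lt_or_gt_of_ne hwj with hneg | hpos
      · refine key (fun i => -w i) ?_ j j.2 (by simpa using hneg)
        simp only [neg_smul, Finset.sum_neg_distrib, hwsum, neg_zero]
      · exact key w hwsum j j.2 hpos

end FarkasDev

namespace FarkasDev

variable {W : Type*} [NormedAddCommGroup W] [NormedSpace ℝ W]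

/-- The cone on a linearly independent finite subfamily is closed. -/
lemma isClosed_indepCone {α : Type*} [Fintype α] (v : α → W) (t : Finset α)
    (hv : LinearIndependent ℝ (fun i : t => v i)) :
    IsClosed {x : W | ∃ ν : α → ℝ, (∀ i, 0 ≤ ν i) ∧ ∑ i ∈ t, ν i • v i = x} := by
  classical
  set f : (t → ℝ) →ₗ[ℝ] W :=
    { toFun := fun ν => ∑ i : t, ν i • v i
      map_add' := by intro a b; simp [add_smul, Finset.sum_add_distrib]
      map_smul' := by intro c a; simp [smul_smul, Finset.smul_sum] } with hf
  have hker : LinearMap.ker f = ⊥ := by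
    rw [LinearMap.ker_eq_bot']
    intro ν hν
    have := Fintype.linearIndependent_iff.mp hv ν hν
    funext i; exact this i
  have hemb := LinearMap.isClosedEmbedding_of_injective hker
  have hset : {x : W | ∃ ν : α → ℝ, (∀ i, 0 ≤ ν i) ∧ ∑ i ∈ t, ν i • v i = x}
      = f '' {ν : t → ℝ | ∀ i, 0 ≤ ν i} := by
    ext x
    simp only [Set.mem_setOf_eq, Set.mem_image, hf, LinearMap.coe_mk, AddHom.coe_mk]
    constructor
    · rintro ⟨ν, hν, rfl⟩
      exact ⟨fun i => ν i, fun i => hν i, (Finset.sum_attach t (fun i => ν i • v i))⟩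
    · rintro ⟨ν, hν, rfl⟩
      refine ⟨fun i => if h : i ∈ t then ν ⟨i, h⟩ else 0, ?_, ?_⟩
      · intro i; by_cases h : i ∈ t <;> simp [h]; exact hν _
      · rw [← Finset.sum_attach t (fun i => (if h : i ∈ t then ν ⟨i, h⟩ else 0) • v i)]
        exact Finset.sum_congr rfl fun i _ => by simp
  rw [hset]
  apply hemb.isClosedMap
  have : {ν : t → ℝ | ∀ i, 0 ≤ ν i} = ⋂ i, {ν : t → ℝ | 0 ≤ ν i} := by
    ext; simp [Set.mem_iInter]
  rw [this]
  exact isClosed_iInter fun i => isClosed_le continuous_const (continuous_apply i)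

/-- A finitely generated cone is closed. -/
lemma isClosed_fgCone {α : Type*} [Fintype α] (v : α → W) :
    IsClosed {x : W | ∃ ν : α → ℝ, (∀ i, 0 ≤ ν i) ∧ ∑ i, ν i • v i = x} := by
  classical
  have hun : {x : W | ∃ ν : α → ℝ, (∀ i, 0 ≤ ν i) ∧ ∑ i, ν i • v i = x}
      = ⋃ t : Finset α, {x : W | LinearIndependent ℝ (fun i : t => v i) ∧
          ∃ ν : α → ℝ, (∀ i, 0 ≤ ν i) ∧ ∑ i ∈ t, ν i • v i = x} := by
    ext x
    simp only [Set.mem_iUnion, Set.mem_setOf_eq]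
    constructor
    · rintro ⟨ν, hν, rfl⟩
      obtain ⟨t, _, hind, ν', hν', hsum⟩ := carath v Finset.univ ν (fun i _ => hν i)
      exact ⟨t, hind, ν', hν', hsum⟩
    · rintro ⟨t, _, ν, hν, rfl⟩
      refine ⟨fun i => if i ∈ t then ν i else 0, fun i => by by_cases h : i ∈ t <;> simp [h, hν i], ?_⟩
      rw [← Finset.sum_subset (Finset.subset_univ t) (fun i _ hit => by simp [hit])]
      exact Finset.sum_congr rfl fun i hit => by simp [hit]
  rw [hun]
  apply isClosed_iUnion_of_finite
  intro t
  by_cases hind : LinearIndependent ℝ (fun i : t => v i)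
  · have : {x : W | LinearIndependent ℝ (fun i : t => v i) ∧
        ∃ ν : α → ℝ, (∀ i, 0 ≤ ν i) ∧ ∑ i ∈ t, ν i • v i = x}
        = {x : W | ∃ ν : α → ℝ, (∀ i, 0 ≤ ν i) ∧ ∑ i ∈ t, ν i • v i = x} := by
      ext x; simp [hind]
    rw [this]
    exact isClosed_indepCone v t hind
  · have : {x : W | LinearIndependent ℝ (fun i : t => v i) ∧
        ∃ ν : α → ℝ, (∀ i, 0 ≤ ν i) ∧ ∑ i ∈ t, ν i • v i = x} = ∅ := by
      ext x; simp [hind]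
    rw [this]; exact isClosed_empty

end FarkasDev

namespace FarkasDev

/-- Farkas: if `b` is not in the cone generated by the `v i`, there is a separating `y`. -/
lemma farkas_sep {N : ℕ} {α : Type*} [Fintype α] (v : α → EuclideanSpace ℝ (Fin N))
    (b : EuclideanSpace ℝ (Fin N))
    (hb : ¬ ∃ ν : α → ℝ, (∀ i, 0 ≤ ν i) ∧ ∑ i, ν i • v i = b) :
    ∃ y : EuclideanSpace ℝ (Fin N), (∀ i, 0 ≤ ⟪v i, y⟫) ∧ ⟪y, b⟫ < 0 := by
  classical
  set K : ConvexCone ℝ (EuclideanSpace ℝ (Fin N)) :=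
    { carrier := {x | ∃ ν : α → ℝ, (∀ i, 0 ≤ ν i) ∧ ∑ i, ν i • v i = x}
      smul_mem' := by
        rintro c hc x ⟨ν, hν, rfl⟩
        exact ⟨fun i => c * ν i, fun i => mul_nonneg hc.le (hν i),
          by rw [Finset.smul_sum]; exact Finset.sum_congr rfl fun i _ => (smul_smul c (ν i) (v i)).symm⟩
      add_mem' := by
        rintro x ⟨ν, hν, rfl⟩ y ⟨ν', hν', rfl⟩
        exact ⟨fun i => ν i + ν' i, fun i => add_nonneg (hν i) (hν' i),
          by rw [← Finset.sum_add_distrib]; exact Finset.sum_congr rfl fun i _ => add_smul _ _ _⟩ } with hK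
  have hne : (K : Set (EuclideanSpace ℝ (Fin N))).Nonempty :=
    ⟨0, ⟨fun _ => 0, fun i => le_refl 0, by simp⟩⟩
  have hcl : IsClosed (K : Set (EuclideanSpace ℝ (Fin N))) := isClosed_fgCone v
  have hbK : b ∉ K := hb
  obtain ⟨y, hy, hyb⟩ : ∃ y, (∀ x ∈ K, 0 ≤ ⟪x, y⟫) ∧ ⟪y, b⟫ < 0 := by
    let C : ProperCone ℝ (EuclideanSpace ℝ (Fin N)) :=
      { carrier := K
        add_mem' := fun ha hb => K.add_mem ha hb
        zero_mem' := ⟨fun _ => 0, fun _ => le_refl 0, by simp⟩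
        smul_mem' := by
          rintro c x ⟨ν, hν, rfl⟩
          exact ⟨fun i => c.1 * ν i, fun i => mul_nonneg c.2 (hν i),
            by rw [Finset.smul_sum]; exact Finset.sum_congr rfl fun i _ => (smul_smul c.1 (ν i) (v i)).symm⟩
        isClosed' := hcl }
    obtain ⟨y, hy, hyb⟩ := C.hyperplane_separation' (x₀ := b) hbK
    exact ⟨y, hy, by rw [real_inner_comm]; exact hyb⟩
  refine ⟨y, fun i => hy (v i) ?_, hyb⟩
  exact ⟨fun j => if j = i then 1 else 0, fun j => by positivity,
    by simp [ite_smul]⟩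

/-- Gale's theorem (affine Farkas): if there is no nonnegative certificate of
infeasibility, the linear inequality system is feasible. -/
lemma gale {N : ℕ} {α : Type*} [Fintype α] (c : α → Fin N → ℝ) (d : α → ℝ)
    (h : ¬ ∃ ν : α → ℝ, (∀ i, 0 ≤ ν i) ∧ (∀ k, ∑ i, ν i * c i k = 0) ∧ ∑ i, ν i * d i < 0) :
    ∃ y : Fin N → ℝ, ∀ i, ∑ k, c i k * y k ≤ d i := by
  classical
  set v : α ⊕ Unit → EuclideanSpace ℝ (Fin (N + 1)) := fun j =>
    Sum.elim (fun i => WithLp.toLp 2 (Fin.snoc (c i) (d i) : Fin (N+1) → ℝ))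
      (fun _ => WithLp.toLp 2 (Fin.snoc (0 : Fin N → ℝ) 1 : Fin (N+1) → ℝ)) j with hv
  set b : EuclideanSpace ℝ (Fin (N + 1)) := WithLp.toLp 2 (Fin.snoc (0 : Fin N → ℝ) (-1) : Fin (N+1) → ℝ) with hb
  have hbK : ¬ ∃ ν : α ⊕ Unit → ℝ, (∀ j, 0 ≤ ν j) ∧ ∑ j, ν j • v j = b := by
    rintro ⟨ν, hν, hsum⟩
    apply h
    have happ : ∀ k : Fin (N+1), ∑ j, ν j * v j k = b k := by
      intro k
      rw [← hsum]
      rw [WithLp.ofLp_sum, Finset.sum_apply]; rfl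
    refine ⟨fun i => ν (Sum.inl i), fun i => hν _, ?_, ?_⟩
    · intro k
      have := happ (Fin.castSucc k)
      rw [Fintype.sum_sum_type] at this
      simpa [hv, hb, Fin.snoc_castSucc, PiLp.toLp_apply] using this
    · have := happ (Fin.last N)
      rw [Fintype.sum_sum_type] at this
      simp only [hv, hb, PiLp.toLp_apply, Fin.snoc_last, Sum.elim_inl, Sum.elim_inr, mul_one,
        Finset.univ_unique, Finset.sum_singleton] at this
      have h0 : 0 ≤ ν (Sum.inr ()) := hν _
      linarith
  obtain ⟨y, hy, hyb⟩ := farkas_sep v b hbK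
  have hyinner : ∀ x z : EuclideanSpace ℝ (Fin (N+1)), ⟪x, z⟫ = ∑ k, x k * z k :=
    fun x z => by rw [PiLp.inner_apply]; exact Finset.sum_congr rfl fun k _ => by simp [mul_comm]
  have ht : 0 < y (Fin.last N) := by
    have := hyb
    rw [hyinner] at this
    rw [Fin.sum_univ_castSucc] at this
    simp only [hb, PiLp.toLp_apply, Fin.snoc_castSucc, Fin.snoc_last, Pi.zero_apply, mul_zero,
      Finset.sum_const_zero, zero_add] at this
    nlinarith
  refine ⟨fun k => -(y (Fin.castSucc k)) / y (Fin.last N), fun i => ?_⟩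
  have := hy (Sum.inl i)
  rw [hyinner] at this
  rw [Fin.sum_univ_castSucc] at this
  simp only [hv, PiLp.toLp_apply, Sum.elim_inl, Fin.snoc_castSucc, Fin.snoc_last] at this
  -- this : 0 ≤ ∑ k, c i k * y k.castSucc + d i * y (Fin.last N)
  have hsum : ∑ k : Fin N, c i k * (-(y (Fin.castSucc k)) / y (Fin.last N))
      = (∑ k : Fin N, -(c i k * y (Fin.castSucc k))) / y (Fin.last N) := by
    rw [Finset.sum_div]
    exact Finset.sum_congr rfl fun k _ => by ring
  simp only [] 
  rw [hsum, div_le_iff₀ ht, Finset.sum_neg_distrib]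
  linarith

end FarkasDev

namespace FarkasDev

/-- Linearity of a continuous linear map on pairs, second slot. -/
lemma clm_snd {n m : ℕ} (L : ((Fin n → ℝ) × (Fin m → ℝ)) →L[ℝ] ℝ) (dy : Fin m → ℝ) :
    L (0, dy) = ∑ j, dy j * L (0, Pi.single j 1) := by
  have hrep : ((0 : Fin n → ℝ), dy)
      = ∑ j, dy j • ((0 : Fin n → ℝ), (Pi.single j 1 : Fin m → ℝ)) := by
    apply Prod.ext
    · simp [Prod.fst_sum]
    · rw [Prod.snd_sum]
      funext k
      simp only [Prod.snd]
      rw [Finset.sum_apply]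
      simp [Pi.single_apply, Finset.sum_ite_eq']
  rw [hrep, map_sum]
  exact Finset.sum_congr rfl fun j _ => by rw [map_smul]; rfl

end FarkasDev

end FarkasAuxSection

/-- Proposition 3.2.3, part 1: for `λ ∈ M(z̄)`, the directional critical set
`K(z̄, λ; dx)` is nonempty if and only if `λ` maximizes
`Σ_i λ'_i ⟨∇_x g_i(z̄), dx⟩` over `λ' ∈ M(z̄)`. -/
theorem stmt_4 {n m l : ℕ}
    (F : Vec n × Vec m → Vec m) (g : Vec n × Vec m → Vec l)
    (Z : Set (Vec n × Vec m))
    (hF : ContDiff ℝ 1 F) (hg : ContDiff ℝ 1 g)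
    (zbar : Vec n × Vec m) (hzbar : zbar ∈ feasSet F g Z)
    (hMne : (multSet F g zbar).Nonempty)
    (dx : Vec n) (lam : Vec l) (hlam : lam ∈ multSet F g zbar) :
    (dirCrit g zbar lam dx).Nonempty ↔
      ∀ lam' ∈ multSet F g zbar,
        ∑ i, lam' i * dgX g i zbar dx ≤ ∑ i, lam i * dgX g i zbar dx := by
  classical
  have hdgY : ∀ (i : Fin l) (dy : Vec m),
      dgY g i zbar dy = ∑ j, dy j * gradYg g i zbar j :=
    fun i dy => FarkasDev.clm_snd (fderiv ℝ (fun p => g p i) zbar) dy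
  have hgle : ∀ i, g zbar i ≤ 0 := by
    intro i
    have h2 := hzbar.2.1 i
    simpa using h2
  have hcomp : ∀ lam' ∈ multSet F g zbar, ∀ i, g zbar i ≠ 0 → lam' i = 0 := by
    intro lam' hlam' i hgi
    have hzero := (Finset.sum_eq_zero_iff_of_nonpos
      (fun i _ => mul_nonpos_of_nonneg_of_nonpos (hlam'.1 i) (hgle i))).mp hlam'.2.2
    rcases mul_eq_zero.mp (hzero i (Finset.mem_univ i)) with h | h
    · exact h
    · exact absurd h hgi
  constructor
  · -- forward direction
    rintro ⟨dy, hdy⟩ lam' hlam'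
    have h1 : ∀ j, ∑ i, lam' i * gradYg g i zbar j = ∑ i, lam i * gradYg g i zbar j := by
      intro j
      have e1 := hlam.2.1 j
      have e2 := hlam'.2.1 j
      linarith
    have key2 : ∑ i, (lam' i - lam i) * dgY g i zbar dy = 0 := by
      calc ∑ i, (lam' i - lam i) * dgY g i zbar dy
          = ∑ i, ∑ j, dy j * ((lam' i - lam i) * gradYg g i zbar j) := by
            refine Finset.sum_congr rfl fun i _ => ?_
            rw [hdgY i dy, Finset.mul_sum]
            exact Finset.sum_congr rfl fun j _ => by ring
        _ = ∑ j, dy j * (∑ i, (lam' i - lam i) * gradYg g i zbar j) := by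
            rw [Finset.sum_comm]
            exact Finset.sum_congr rfl fun j _ => by rw [Finset.mul_sum]
        _ = 0 := by
            apply Finset.sum_eq_zero
            intro j _
            have hz : ∑ i, (lam' i - lam i) * gradYg g i zbar j = 0 := by
              simp only [sub_mul]
              rw [Finset.sum_sub_distrib, h1 j, sub_self]
            rw [hz, mul_zero]
    have key3 : ∀ i ∈ Finset.univ,
        (lam' i - lam i) * (dgX g i zbar dx + dgY g i zbar dy) ≤ 0 := by
      intro i _
      by_cases hgi : g zbar i = 0
      · obtain ⟨hle, heq⟩ := hdy i hgi
        rcases (hlam.1 i).eq_or_lt with h0 | hpos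
        · have hs := hle h0.symm
          nlinarith [hlam'.1 i]
        · rw [heq hpos, mul_zero]
      · rw [hcomp lam' hlam' i hgi, hcomp lam hlam i hgi, sub_self, zero_mul]
    have hsum := Finset.sum_nonpos key3
    have hexp : ∑ i, (lam' i - lam i) * (dgX g i zbar dx + dgY g i zbar dy)
        = (∑ i, lam' i * dgX g i zbar dx - ∑ i, lam i * dgX g i zbar dx)
          + ∑ i, (lam' i - lam i) * dgY g i zbar dy := by
      rw [← Finset.sum_sub_distrib, ← Finset.sum_add_distrib]
      exact Finset.sum_congr rfl fun i _ => by ring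
    rw [hexp, key2, add_zero] at hsum
    linarith
  · -- reverse direction
    intro hopt
    by_contra hne
    rw [Set.not_nonempty_iff_eq_empty] at hne
    set c : (Fin l ⊕ Fin l) → Fin m → ℝ := Sum.elim
        (fun i => if g zbar i = 0 then (fun j => gradYg g i zbar j) else 0)
        (fun i => if g zbar i = 0 ∧ 0 < lam i then (fun j => -gradYg g i zbar j) else 0)
      with hc
    set d : (Fin l ⊕ Fin l) → ℝ := Sum.elim
        (fun i => if g zbar i = 0 then -dgX g i zbar dx else 0)
        (fun i => if g zbar i = 0 ∧ 0 < lam i then dgX g i zbar dx else 0) with hd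
    have hinfeas : ¬ ∃ y : Fin m → ℝ, ∀ j, ∑ k, c j k * y k ≤ d j := by
      rintro ⟨y, hy⟩
      have hmem : y ∈ dirCrit g zbar lam dx := by
        intro i hgi
        have hyl := hy (Sum.inl i)
        simp only [hc, hd, Sum.elim_inl, hgi, if_true, if_pos] at hyl
        have hdgYy : dgY g i zbar y = ∑ k, gradYg g i zbar k * y k := by
          rw [hdgY]
          exact Finset.sum_congr rfl fun k _ => mul_comm _ _
        constructor
        · intro _
          rw [hdgYy]
          linarith
        · intro hpos
          have hyr := hy (Sum.inr i)
          simp only [hc, hd, Sum.elim_inr, hgi, hpos, and_self, if_true, if_pos,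
            Pi.neg_apply, neg_mul] at hyr
          rw [hdgYy]
          have : ∑ k, -(gradYg g i zbar k * y k) = -∑ k, gradYg g i zbar k * y k :=
            Finset.sum_neg_distrib _
          rw [this] at hyr
          linarith
      rw [hne] at hmem
      exact hmem
    have hcert : ∃ ν : (Fin l ⊕ Fin l) → ℝ, (∀ j, 0 ≤ ν j) ∧
        (∀ k, ∑ j, ν j * c j k = 0) ∧ ∑ j, ν j * d j < 0 := by
      by_contra hno
      exact hinfeas (FarkasDev.gale c d hno)
    obtain ⟨ν, hν, hνc, hνd⟩ := hcert
    set μ : Fin l → ℝ := fun i =>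
      (if g zbar i = 0 then ν (Sum.inl i) else 0)
        - (if g zbar i = 0 ∧ 0 < lam i then ν (Sum.inr i) else 0) with hμdef
    have hμa : ∀ k, ∑ i, μ i * gradYg g i zbar k = 0 := by
      intro k
      have := hνc k
      rw [Fintype.sum_sum_type] at this
      rw [← this, ← Finset.sum_add_distrib]
      refine Finset.sum_congr rfl fun i _ => ?_
      simp only [hμdef, hc, Sum.elim_inl, Sum.elim_inr]
      by_cases h1 : g zbar i = 0
      · by_cases h2 : 0 < lam i
        · simp [h1, h2, Pi.neg_apply]; ring
        · simp [h1, h2]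
      · have h2 : ¬ (g zbar i = 0 ∧ 0 < lam i) := fun h => h1 h.1
        simp [h1, h2]
    have hμd : 0 < ∑ i, μ i * dgX g i zbar dx := by
      have heq : ∑ i, μ i * dgX g i zbar dx = -∑ j, ν j * d j := by
        rw [Fintype.sum_sum_type, neg_add, ← Finset.sum_neg_distrib, ← Finset.sum_neg_distrib,
          ← Finset.sum_add_distrib]
        refine Finset.sum_congr rfl fun i _ => ?_
        simp only [hμdef, hd, Sum.elim_inl, Sum.elim_inr]
        by_cases h1 : g zbar i = 0
        · by_cases h2 : 0 < lam i
          · simp [h1, h2]; ring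
          · have h3 : ¬ (g zbar i = 0 ∧ 0 < lam i) := fun h => h2 h.2
            simp [h1, h2, h3]
        · have h2 : ¬ (g zbar i = 0 ∧ 0 < lam i) := fun h => h1 h.1
          simp [h1, h2]
      rw [heq]
      linarith
    have hμ0 : ∀ i, g zbar i ≠ 0 → μ i = 0 := by
      intro i hgi
      have h2 : ¬ (g zbar i = 0 ∧ 0 < lam i) := fun h => hgi h.1
      simp [hμdef, hgi, h2]
    have hμneg : ∀ i, μ i < 0 → 0 < lam i := by
      intro i hi
      by_contra hpos
      have h2 : ¬ (g zbar i = 0 ∧ 0 < lam i) := fun h => hpos h.2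
      simp only [hμdef, h2, if_false, sub_zero] at hi
      by_cases h1 : g zbar i = 0
      · simp only [h1, if_true] at hi
        exact absurd hi (not_lt.mpr (hν _))
      · simp only [h1, if_false] at hi
        exact absurd hi (by norm_num)
    -- choose t > 0 with lam + t • μ ≥ 0
    obtain ⟨t, ht0, htb⟩ : ∃ t : ℝ, 0 < t ∧ ∀ i, 0 ≤ lam i + t * μ i := by
      set T : Finset (Fin l) := Finset.univ.filter (fun i => μ i < 0) with hT
      by_cases hTne : T.Nonempty
      · refine ⟨T.inf' hTne (fun i => lam i / (-(μ i))), ?_, ?_⟩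
        · rw [Finset.lt_inf'_iff]
          intro i hi
          have hμi : μ i < 0 := (Finset.mem_filter.mp hi).2
          exact div_pos (hμneg i hμi) (neg_pos.mpr hμi)
        · intro i
          by_cases hμi : μ i < 0
          · have hle : T.inf' hTne (fun i => lam i / (-(μ i))) ≤ lam i / (-(μ i)) :=
              Finset.inf'_le _ (by simp [hT, hμi])
            have := (le_div_iff₀ (neg_pos.mpr hμi)).mp hle
            nlinarith
          · have h1 : 0 ≤ μ i := not_lt.mp hμi
            have h2 : 0 < T.inf' hTne (fun i => lam i / (-(μ i))) := by
              rw [Finset.lt_inf'_iff]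
              intro i hi
              have hμi : μ i < 0 := (Finset.mem_filter.mp hi).2
              exact div_pos (hμneg i hμi) (neg_pos.mpr hμi)
            have h3 := mul_nonneg h2.le h1
            linarith [hlam.1 i]
      · refine ⟨1, one_pos, fun i => ?_⟩
        have : ¬ μ i < 0 := by
          intro h
          exact hTne ⟨i, by simp [hT, h]⟩
        nlinarith [hlam.1 i, not_lt.mp this]
    set lam' : Vec l := fun i => lam i + t * μ i with hlam'def
    have hlam'mem : lam' ∈ multSet F g zbar := by
      refine ⟨htb, ?_, ?_⟩
      · intro j
        have hexp : ∑ i, lam' i * gradYg g i zbar j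
            = ∑ i, lam i * gradYg g i zbar j + t * ∑ i, μ i * gradYg g i zbar j := by
          rw [Finset.mul_sum, ← Finset.sum_add_distrib]
          exact Finset.sum_congr rfl fun i _ => by simp only [hlam'def]; ring
        rw [hexp, hμa j, mul_zero, add_zero]
        exact hlam.2.1 j
      · have hexp : ∑ i, lam' i * g zbar i
            = ∑ i, lam i * g zbar i + t * ∑ i, μ i * g zbar i := by
          rw [Finset.mul_sum, ← Finset.sum_add_distrib]
          exact Finset.sum_congr rfl fun i _ => by simp only [hlam'def]; ring
        have hμg : ∑ i, μ i * g zbar i = 0 := by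
          apply Finset.sum_eq_zero
          intro i _
          by_cases h1 : g zbar i = 0
          · rw [h1, mul_zero]
          · rw [hμ0 i h1, zero_mul]
        rw [hexp, hμg, mul_zero, add_zero]
        exact hlam.2.2
    have hle := hopt lam' hlam'mem
    have hgt : ∑ i, lam i * dgX g i zbar dx < ∑ i, lam' i * dgX g i zbar dx := by
      have hexp : ∑ i, lam' i * dgX g i zbar dx
          = ∑ i, lam i * dgX g i zbar dx + t * ∑ i, μ i * dgX g i zbar dx := by
        rw [Finset.mul_sum, ← Finset.sum_add_distrib]
        exact Finset.sum_congr rfl fun i _ => by simp only [hlam'def]; ring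
      rw [hexp]
      nlinarith
    linarith
end
end
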